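/- arXiv:1902.11093 — 7 statements merged into one kernel-verified Lean document; each statement's English description precedes it below -/
import Mathlib

section
/- Let L be an even lattice and s ∈ L primitive with (s,s) ≠ 0. If the reflection t(x) = x - (2(s,x)/(s,s))·s preserves L, then Div(s) = -(s,s) or Div(s) = -(s,s)/2 when (s,s) < 0 (equivalently |(s,s)| equals Div(s) or 2·Div(s)), where Div(s) is the positive generator of the ideal {(s,x) : x ∈ L} of ℤ. -/
/-- A vector `s` of a lattice `L` is primitive if it is not a multiple `m • w`,
`m > 1`, of another lattice vector `w`. -/
def IsPrimitiveIn {V : Type*} [AddCommGroup V] [Module ℚ V]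
    (L : Submodule ℤ V) (s : V) : Prop :=
  s ∈ L ∧ ¬ ∃ (m : ℤ) (w : V), w ∈ L ∧ 1 < m ∧ s = (m : ℚ) • w

/-- If the reflection in a primitive vector `s` with `(s,s) < 0` preserves the even
lattice `L`, then the divisor `d` of `s` (the positive generator of the ideal
`{(s,x) : x ∈ L}` of `ℤ`) equals `-(s,s)` or `-(s,s)/2`. -/
theorem reflection_divisor
    {V : Type*} [AddCommGroup V] [Module ℚ V]
    (B : V →ₗ[ℚ] V →ₗ[ℚ] ℚ)
    (L : Submodule ℤ V)
    (hsymm : ∀ x y : V, B x y = B y x)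
    (hint : ∀ x ∈ L, ∀ y ∈ L, ∃ n : ℤ, B x y = (n : ℚ))
    (heven : ∀ x ∈ L, ∃ n : ℤ, B x x = 2 * (n : ℚ))
    (s : V) (hs : IsPrimitiveIn L s) (hneg : B s s < 0)
    -- `d` is the positive generator of the ideal `{(s,x) : x ∈ L} ⊆ ℤ`:
    (d : ℤ) (hd0 : 0 < d)
    (hgen : ∃ x ∈ L, B s x = (d : ℚ))
    (hdvd : ∀ x ∈ L, ∃ k : ℤ, B s x = (k : ℚ) * (d : ℚ))
    -- the reflection preserves `L`:
    (hrefl : ∀ x ∈ L, x - (2 * B s x / B s s) • s ∈ L) :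
    (d : ℚ) = -(B s s) ∨ (d : ℚ) = -(B s s) / 2 := by
  obtain ⟨hsL, hprim⟩ := hs
  obtain ⟨x, hxL, hx⟩ := hgen
  obtain ⟨k, hk⟩ := hdvd s hsL
  have hdQ : (0 : ℚ) < (d : ℚ) := by exact_mod_cast hd0
  have hkneg : k < 0 := by
    by_contra h
    push_neg at h
    have : (0 : ℚ) ≤ (k : ℚ) := by exact_mod_cast h
    nlinarith [hk]
  have hkQ : (k : ℚ) ≠ 0 := by
    intro h
    have : k = 0 := by exact_mod_cast h
    omega
  -- key primitivity consequence
  have key : ∀ m : ℤ, ∀ w, w ∈ L → s = (m : ℚ) • w → m = 1 ∨ m = -1 := by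
    intro m w hw hsw
    rcases lt_trichotomy m 0 with h | h | h
    · right
      by_contra hne
      have hm : 1 < -m := by omega
      refine hprim ⟨-m, -w, L.neg_mem hw, hm, ?_⟩
      push_cast
      rw [hsw]
      module
    · exfalso
      subst h
      simp at hsw
      rw [hsw] at hneg
      simp at hneg
    · left
      by_contra hne
      have hm : 1 < m := by omega
      exact hprim ⟨m, w, hw, hm, hsw⟩
  -- the scaled vector (2/k) • s lies in L
  have hts : ((2 / (k : ℚ)) • s) ∈ L := by
    have h1 := hrefl x hxL
    have h2 : x - (x - (2 * B s x / B s s) • s) ∈ L := L.sub_mem hxL h1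
    have h3 : x - (x - (2 * B s x / B s s) • s) = (2 / (k : ℚ)) • s := by
      have hc : 2 * B s x / B s s = 2 / (k : ℚ) := by
        rw [hx, hk]
        field_simp
      rw [hc]
      abel
    rwa [h3] at h2
  rcases Int.even_or_odd k with ⟨m, hm⟩ | ⟨t, ht⟩
  · -- k = 2m, so (1/m) • s ∈ L, s = m • ((1/m) • s)
    have hmne : m ≠ 0 := by omega
    have hmQ : (m : ℚ) ≠ 0 := by exact_mod_cast hmne
    have hcoef : (2 / (k : ℚ)) = 1 / (m : ℚ) := by
      have : (k : ℚ) = 2 * (m : ℚ) := by rw [hm]; push_cast; ring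
      rw [this]; field_simp
    rw [hcoef] at hts
    have hsw : s = (m : ℚ) • ((1 / (m : ℚ)) • s) := by
      rw [smul_smul]
      rw [show (m : ℚ) * (1 / (m : ℚ)) = 1 by field_simp]
      rw [one_smul]
    rcases key m _ hts hsw with h1 | h1
    · omega
    · right
      have hk2 : k = -2 := by omega
      rw [hk, hk2]
      push_cast
      ring
  · -- k odd: (1/k) • s ∈ L
    have hv : ((t + 1 : ℤ) • ((2 / (k : ℚ)) • s)) - s ∈ L :=
      L.sub_mem (L.smul_mem _ hts) hsL
    have hveq : ((t + 1 : ℤ) • ((2 / (k : ℚ)) • s)) - s = (1 / (k : ℚ)) • s := by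
      rw [Int.cast_smul_eq_zsmul ℚ (t + 1 : ℤ) ((2 / (k : ℚ)) • s) |>.symm]
      rw [smul_smul]
      rw [show s = (1 : ℚ) • s from (one_smul ℚ s).symm]
      rw [smul_smul, smul_smul, ← sub_smul]
      congr 1
      have hkc : (k : ℚ) = 2 * (t : ℚ) + 1 := by exact_mod_cast ht
      field_simp
      rw [hkc]; push_cast; ring
    rw [hveq] at hv
    have hsw : s = (k : ℚ) • ((1 / (k : ℚ)) • s) := by
      rw [smul_smul, show (k : ℚ) * (1 / (k : ℚ)) = 1 by field_simp, one_smul]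
    rcases key k _ hv hsw with h1 | h1
    · omega
    · left
      rw [hk, h1]
      push_cast
      ring
end

section
/- Let L be an even unimodular lattice and M ⊆ L a primitive nondegenerate sublattice with orthogonal complement K = M⊥ ∩ L. Then M ⊕ K ⊆ L ⊆ M* ⊕ K*, and the finite abelian groups M*/M and K*/K are isomorphic via an isomorphism γ satisfying q_K ∘ γ = -q_M, where q denotes the discriminant quadratic form with values in ℚ/2ℤ. Moreover L = {(x,y) ∈ M* ⊕ K* : ȳ = γ(x̄)}, where x̄, ȳ denote the classes in M*/M and K*/K. -/
/-- The dual lattice `L* = {x ∈ L ⊗ ℚ : (x,y) ∈ ℤ for all y ∈ L}`, realised inside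
the ambient rational vector space. -/
def dualLat {V : Type*} [AddCommGroup V] [Module ℚ V]
    (B : V →ₗ[ℚ] V →ₗ[ℚ] ℚ) (L : Submodule ℤ V) : Submodule ℤ V where
  carrier := {x | x ∈ Submodule.span ℚ (L : Set V) ∧ ∀ y ∈ L, ∃ n : ℤ, B x y = (n : ℚ)}
  zero_mem' := ⟨Submodule.zero_mem _, fun y _ => ⟨0, by simp⟩⟩
  add_mem' := by
    rintro a b ⟨ha1, ha2⟩ ⟨hb1, hb2⟩
    refine ⟨Submodule.add_mem _ ha1 hb1, fun y hy => ?_⟩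
    obtain ⟨m, hm⟩ := ha2 y hy
    obtain ⟨k, hk⟩ := hb2 y hy
    refine ⟨m + k, ?_⟩
    rw [map_add, LinearMap.add_apply, hm, hk]
    push_cast; ring
  smul_mem' := by
    rintro n x ⟨hx1, hx2⟩
    have h : (n : ℤ) • x = ((n : ℚ)) • x := (Int.cast_smul_eq_zsmul ℚ n x).symm
    constructor
    · rw [h]; exact Submodule.smul_mem _ _ hx1
    · intro y hy
      obtain ⟨m, hm⟩ := hx2 y hy
      refine ⟨n * m, ?_⟩
      rw [h, map_smul, LinearMap.smul_apply, hm, smul_eq_mul]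
      push_cast; ring

lemma exists_int_smul_mem' {V : Type*} [AddCommGroup V] [Module ℚ V]
    (L : Submodule ℤ V) {v : V} (hv : v ∈ Submodule.span ℚ (L : Set V)) :
    ∃ n : ℤ, n ≠ 0 ∧ (n : ℚ) • v ∈ L := by
  induction hv using Submodule.span_induction with
  | mem x hx => exact ⟨1, one_ne_zero, by simpa using hx⟩
  | zero => exact ⟨1, one_ne_zero, by simp⟩
  | add x y hx hy ihx ihy =>
    obtain ⟨n, hn, hnx⟩ := ihx
    obtain ⟨m, hm, hmy⟩ := ihy
    refine ⟨n * m, mul_ne_zero hn hm, ?_⟩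
    have : ((n * m : ℤ) : ℚ) • (x + y) = m • ((n : ℚ) • x) + n • ((m : ℚ) • y) := by
      rw [← Int.cast_smul_eq_zsmul ℚ m, ← Int.cast_smul_eq_zsmul ℚ n ((m : ℚ) • y),
        smul_smul, smul_smul, smul_add]
      push_cast
      ring_nf
    rw [this]
    exact L.add_mem (L.smul_mem m hnx) (L.smul_mem n hmy)
  | smul c x hx ih =>
    obtain ⟨n, hn, hnx⟩ := ih
    refine ⟨(c.den : ℤ) * n, mul_ne_zero (by exact_mod_cast c.den_ne_zero) hn, ?_⟩
    have hden : (c.den : ℚ) * c = c.num := by rw [mul_comm]; exact_mod_cast Rat.mul_den_eq_num c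
    have : (((c.den : ℤ) * n : ℤ) : ℚ) • (c • x) = c.num • ((n : ℚ) • x) := by
      rw [← Int.cast_smul_eq_zsmul ℚ c.num, smul_smul, smul_smul]
      push_cast
      rw [show (c.den : ℚ) * (n : ℚ) * c = ((c.den : ℚ) * c) * n by ring, hden]
    rw [this]
    exact L.smul_mem _ hnx

lemma key_surj {V : Type*} [AddCommGroup V] [Module ℚ V] [FiniteDimensional ℚ V]
    (B : V →ₗ[ℚ] V →ₗ[ℚ] ℚ)
    (hnd : ∀ x : V, (∀ y : V, B x y = 0) → x = 0)
    (L : Submodule ℤ V)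
    (hspan : Submodule.span ℚ (L : Set V) = ⊤)
    (hfg : L.FG)
    (hunimod : dualLat B L = L)
    (N : Submodule ℤ V) (hNL : N ≤ L)
    (hNprim : ∀ x ∈ L, ∀ n : ℤ, n ≠ 0 → n • x ∈ N → x ∈ N)
    {a : V} (ha : a ∈ dualLat B N) :
    ∃ l ∈ L, ∀ y ∈ N, B (l - a) y = 0 := by
  classical
  haveI : Module.Finite ℤ ↥L := Module.Finite.iff_fg.mpr hfg
  set M' : Submodule ℤ ↥L := N.comap L.subtype with hM'
  -- the quotient is torsion-free
  haveI : NoZeroSMulDivisors ℤ (↥L ⧸ M') := by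
    constructor
    intro n x h
    by_cases hn : n = 0
    · exact Or.inl hn
    · right
      obtain ⟨l, rfl⟩ := Submodule.Quotient.mk_surjective M' x
      rw [← Submodule.Quotient.mk_smul, Submodule.Quotient.mk_eq_zero] at h
      rw [Submodule.Quotient.mk_eq_zero]
      have : n • (l : V) ∈ N := by
        simpa [hM', Submodule.coe_smul] using h
      exact hNprim (l : V) l.2 n hn this
  haveI : Module.Free ℤ (↥L ⧸ M') := Module.free_of_finite_type_torsion_free'
  obtain ⟨s, hs⟩ := Module.projective_lifting_property M'.mkQ (LinearMap.id)
      (Submodule.mkQ_surjective M')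
  set t : ↥L →ₗ[ℤ] ↥L := LinearMap.id - s ∘ₗ M'.mkQ with hT
  have ht : ∀ l : ↥L, (t l : V) ∈ N := by
    intro l
    have h0 : M'.mkQ (t l) = 0 := by
      have := congrFun (congrArg DFunLike.coe hs) (M'.mkQ l)
      simp only [LinearMap.comp_apply, LinearMap.id_apply, Submodule.mkQ_apply] at this ⊢
      simp only [hT, LinearMap.sub_apply, LinearMap.comp_apply, LinearMap.id_apply, map_sub,
        Submodule.mkQ_apply] at *
      rw [Submodule.Quotient.mk_sub, sub_eq_zero]
      exact this.symm
    have : t l ∈ M' := by rwa [Submodule.mkQ_apply, Submodule.Quotient.mk_eq_zero] at h0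
    exact this
  set g : ↥L →ₗ[ℤ] ℚ := ((B a).restrictScalars ℤ) ∘ₗ (L.subtype ∘ₗ t) with hG
  have hg : ∀ l : ↥L, ∃ n : ℤ, g l = n := fun l => ha.2 _ (ht l)
  have hgN : ∀ y (hy : y ∈ N), g ⟨y, hNL hy⟩ = B a y := by
    intro y hy
    have hmem : (⟨y, hNL hy⟩ : ↥L) ∈ M' := hy
    have : t ⟨y, hNL hy⟩ = ⟨y, hNL hy⟩ := by
      simp [hT, (Submodule.Quotient.mk_eq_zero M').mpr hmem]
    simp [hG, this]
  -- a ℤ-basis of L is a ℚ-basis of V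
  haveI : NoZeroSMulDivisors ℤ ↥L := by
    constructor
    intro n x h
    by_cases hn : n = 0
    · exact Or.inl hn
    · right
      have h' : ((n : ℚ)) • (x : V) = 0 := by
        rw [Int.cast_smul_eq_zsmul, ← Submodule.coe_smul, h, Submodule.coe_zero]
      exact Subtype.ext ((smul_eq_zero.mp h').resolve_left (by exact_mod_cast hn))
  haveI : Module.Free ℤ ↥L := Module.free_of_finite_type_torsion_free'
  set b := Module.Free.chooseBasis ℤ ↥L with hb
  set v : Module.Free.ChooseBasisIndex ℤ ↥L → V := fun i => ((b i : ↥L) : V) with hv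
  have hliZ : LinearIndependent ℤ v :=
    b.linearIndependent.map' L.subtype (Submodule.ker_subtype L)
  have hli : LinearIndependent ℚ v := (LinearIndependent.iff_fractionRing ℤ ℚ).mp hliZ
  have hsub : (L : Set V) ⊆ (Submodule.span ℚ (Set.range v) : Set V) := by
    intro x hx
    have h1 : (⟨x, hx⟩ : ↥L) ∈ Submodule.span ℤ (Set.range b) := by
      rw [b.span_eq]; trivial
    have h2 : x ∈ Submodule.map L.subtype (Submodule.span ℤ (Set.range b)) :=
      ⟨⟨x, hx⟩, h1, rfl⟩
    rw [Submodule.map_span] at h2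
    have h3 : L.subtype '' Set.range b = Set.range v := by
      ext z; simp [hv, Set.range_comp]
    rw [h3] at h2
    exact Submodule.span_subset_span ℤ ℚ _ h2
  have hsp : ⊤ ≤ Submodule.span ℚ (Set.range v) := by
    rw [← hspan]
    exact Submodule.span_le.mpr hsub
  set bV : Module.Basis (Module.Free.ChooseBasisIndex ℤ ↥L) ℚ V := Module.Basis.mk hli hsp with hbV
  set G : V →ₗ[ℚ] ℚ := bV.constr ℚ (fun i => g (b i)) with hGdef
  have hGg : ∀ l : ↥L, G (l : V) = g l := by
    intro l
    have : (G.restrictScalars ℤ) ∘ₗ L.subtype = g := by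
      apply b.ext
      intro i
      simp only [LinearMap.comp_apply, LinearMap.restrictScalars_apply, Submodule.coe_subtype]
      have : ((b i : ↥L) : V) = bV i := by rw [hbV, Module.Basis.mk_apply]
      rw [this, hGdef, Module.Basis.constr_basis]
    exact congrFun (congrArg DFunLike.coe this) l
  set v0 : V := (LinearMap.BilinForm.toDual B (.ofSeparatingLeft hnd)).symm G with hv0
  have hBv0 : ∀ y : V, B v0 y = G y := fun y =>
    LinearMap.BilinForm.apply_toDual_symm_apply G y
  have hv0L : v0 ∈ L := by
    rw [← hunimod]
    refine ⟨by rw [hspan]; trivial, fun y hy => ?_⟩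
    obtain ⟨n, hn⟩ := hg ⟨y, hy⟩
    exact ⟨n, by rw [hBv0, hGg ⟨y, hy⟩]; exact hn⟩
  refine ⟨v0, hv0L, fun y hy => ?_⟩
  have : B (v0 - a) y = B v0 y - B a y := by
    rw [map_sub, LinearMap.sub_apply]
  rw [this, hBv0, hGg ⟨y, hNL hy⟩, hgN y hy, sub_self]


/-- Gluing lemma: for a primitive nondegenerate sublattice `M` of an even unimodular
lattice `L` with orthogonal complement `K = M⊥ ∩ L`, one has
`M ⊕ K ⊆ L ⊆ M* ⊕ K*`, and there is an isomorphism `γ : M*/M ≅ K*/K` with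
`q_K ∘ γ = -q_M` (values in `ℚ/2ℤ`), such that
`L = {(x,y) ∈ M* ⊕ K* : ȳ = γ(x̄)}`. -/
theorem gluing_lemma
    {V : Type*} [AddCommGroup V] [Module ℚ V] [FiniteDimensional ℚ V]
    (B : V →ₗ[ℚ] V →ₗ[ℚ] ℚ)
    (hsymm : ∀ x y : V, B x y = B y x)
    (hnd : ∀ x : V, (∀ y : V, B x y = 0) → x = 0)
    (L M K : Submodule ℤ V)
    (hspan : Submodule.span ℚ (L : Set V) = ⊤)
    (hfg : L.FG)
    (hint : ∀ x ∈ L, ∀ y ∈ L, ∃ n : ℤ, B x y = (n : ℚ))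
    (heven : ∀ x ∈ L, ∃ n : ℤ, B x x = 2 * (n : ℚ))
    -- `L` is unimodular:
    (hunimod : dualLat B L = L)
    -- `M` is a primitive nondegenerate sublattice of `L`:
    (hML : M ≤ L)
    (hMprim : ∀ x ∈ L, ∀ n : ℤ, n ≠ 0 → n • x ∈ M → x ∈ M)
    (hMnd : ∀ x ∈ Submodule.span ℚ (M : Set V), (∀ y ∈ M, B x y = 0) → x = 0)
    -- `K = M⊥ ∩ L`:
    (hK : ∀ x : V, x ∈ K ↔ (x ∈ L ∧ ∀ y ∈ M, B x y = 0)) :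
    (M ⊔ K ≤ L) ∧
    (∀ x ∈ L, ∃ a ∈ dualLat B M, ∃ b ∈ dualLat B K, x = a + b) ∧
    ∃ γ : (↥(dualLat B M) ⧸ Submodule.comap (dualLat B M).subtype M) ≃+
          (↥(dualLat B K) ⧸ Submodule.comap (dualLat B K).subtype K),
      (∀ (x : ↥(dualLat B M)) (y : ↥(dualLat B K)),
          γ (Submodule.Quotient.mk x) = Submodule.Quotient.mk y →
          ∃ k : ℤ, B (y : V) (y : V) + B (x : V) (x : V) = 2 * (k : ℚ)) ∧
      (∀ (x : ↥(dualLat B M)) (y : ↥(dualLat B K)),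
          ((x : V) + (y : V) ∈ L ↔
            γ (Submodule.Quotient.mk x) = Submodule.Quotient.mk y)) := by
  classical
  have hrefl : B.IsRefl := fun x y h => by rw [hsymm]; exact h
  set W : Submodule ℚ V := Submodule.span ℚ (M : Set V) with hWdef
  have hWnd : (LinearMap.BilinForm.restrict B W).Nondegenerate := by
    refine ⟨fun x hx => ?_, fun x hx => ?_⟩
    · exact Subtype.ext (hMnd x.1 x.2 fun y hy => hx ⟨y, Submodule.subset_span hy⟩)
    · exact Subtype.ext (hMnd x.1 x.2 fun y hy => by
        rw [hsymm]; exact hx ⟨y, Submodule.subset_span hy⟩)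
  have hcompl : IsCompl W (LinearMap.BilinForm.orthogonal B W) :=
    (LinearMap.BilinForm.restrict_nondegenerate_iff_isCompl_orthogonal hrefl).mp hWnd
  set W' : Submodule ℚ V := LinearMap.BilinForm.orthogonal B W with hW'def
  set π : V →ₗ[ℚ] V := W.subtype ∘ₗ Submodule.projectionOnto W W' hcompl with hπdef
  have hπW : ∀ x, π x ∈ W := fun x => (Submodule.projectionOnto W W' hcompl x).2
  have hπ'W' : ∀ x, x - π x ∈ W' := by
    intro x
    have h := Submodule.projection_add_projection_eq_self hcompl x
    have h2 : ((Submodule.projectionOnto W' W hcompl.symm x : V)) = x - π x :=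
      eq_sub_of_add_eq' h
    exact h2 ▸ (Submodule.projectionOnto W' W hcompl.symm x).2
  have hπid : ∀ x ∈ W, π x = x := by
    intro x hx
    rw [hπdef]
    simp only [LinearMap.comp_apply, Submodule.coe_subtype]
    rw [show x = ((⟨x, hx⟩ : ↥W) : V) from rfl,
      Submodule.projectionOnto_apply_left hcompl ⟨x, hx⟩]
  have hπ0 : ∀ x ∈ W', π x = 0 := by
    intro x hx
    rw [hπdef]
    simp only [LinearMap.comp_apply, Submodule.coe_subtype]
    rw [Submodule.projectionOnto_apply_of_mem_right hcompl hx, Submodule.coe_zero]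
  have horth : ∀ w ∈ W, ∀ w' ∈ W', B w w' = 0 := fun w hw w' hw' => hw' w hw
  have horth' : ∀ w ∈ W, ∀ w' ∈ W', B w' w = 0 := fun w hw w' hw' => by
    rw [hsymm]; exact horth w hw w' hw'
  have hKL : K ≤ L := fun z hz => ((hK z).mp hz).1
  have hKW' : ∀ z ∈ K, z ∈ W' := by
    intro z hz
    obtain ⟨-, hz2⟩ := (hK z).mp hz
    intro n hn
    have hle : W ≤ LinearMap.ker (B.flip z) := by
      rw [hWdef]
      refine Submodule.span_le.mpr fun y hy => ?_
      simp only [SetLike.mem_coe, LinearMap.mem_ker, LinearMap.flip_apply]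
      rw [hsymm]; exact hz2 y hy
    have := hle hn
    simpa only [LinearMap.mem_ker, LinearMap.flip_apply] using this
  have hspanK : Submodule.span ℚ (K : Set V) = W' := by
    apply le_antisymm
    · exact Submodule.span_le.mpr fun z hz => hKW' z hz
    · intro v hv
      have hvL : v ∈ Submodule.span ℚ (L : Set V) := by rw [hspan]; trivial
      obtain ⟨n, hn, hnv⟩ := exists_int_smul_mem' L hvL
      have hnvW' : (n : ℚ) • v ∈ W' := Submodule.smul_mem _ _ hv
      have hnvK : (n : ℚ) • v ∈ K := (hK _).mpr ⟨hnv, fun y hy => by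
        rw [hsymm]; exact horth y (Submodule.subset_span hy) _ hnvW'⟩
      have hv' : v = (n : ℚ)⁻¹ • ((n : ℚ) • v) := by
        rw [smul_smul, inv_mul_cancel₀ (by exact_mod_cast hn), one_smul]
      rw [hv']
      exact Submodule.smul_mem _ _ (Submodule.subset_span hnvK)
  have hLWM : ∀ x ∈ L, x ∈ W → x ∈ M := by
    intro x hxL hxW
    obtain ⟨n, hn, hnx⟩ := exists_int_smul_mem' M hxW
    rw [Int.cast_smul_eq_zsmul ℚ] at hnx
    exact hMprim x hxL n hn hnx
  have hπDM : ∀ x ∈ L, π x ∈ dualLat B M := by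
    intro x hx
    refine ⟨hπW x, fun y hy => ?_⟩
    obtain ⟨n, hn⟩ := hint x hx y (hML hy)
    refine ⟨n, ?_⟩
    have h1 : B (x - π x) y = 0 := horth' y (Submodule.subset_span hy) _ (hπ'W' x)
    have h2 : B (π x) y = B x y - B (x - π x) y := by
      rw [map_sub, LinearMap.sub_apply]; ring
    rw [h2, h1, hn, sub_zero]
  have hπDK : ∀ x ∈ L, x - π x ∈ dualLat B K := by
    intro x hx
    refine ⟨by rw [hspanK]; exact hπ'W' x, fun z hz => ?_⟩
    obtain ⟨n, hn⟩ := hint x hx z (hKL hz)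
    refine ⟨n, ?_⟩
    have h1 : B (π x) z = 0 := horth _ (hπW x) z (hKW' z hz)
    rw [map_sub, LinearMap.sub_apply, h1, hn, sub_zero]
  refine ⟨sup_le hML hKL, fun x hx => ⟨π x, hπDM x hx, x - π x, hπDK x hx, by abel⟩, ?_⟩
  -- the gluing isomorphism
  set DM := dualLat B M with hDM
  set DK := dualLat B K with hDK
  set πL : ↥L →ₗ[ℤ] ↥DM :=
    LinearMap.codRestrict DM ((π.restrictScalars ℤ) ∘ₗ L.subtype)
      (fun l => hπDM (l : V) l.2) with hπL'
  set ρ : ↥L →ₗ[ℤ] ↥DK :=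
    LinearMap.codRestrict DK (((LinearMap.id - π).restrictScalars ℤ) ∘ₗ L.subtype)
      (fun l => by simpa using hπDK (l : V) l.2) with hρ'
  have hπLval : ∀ l : ↥L, (πL l : V) = π (l : V) := fun l => rfl
  have hρval : ∀ l : ↥L, (ρ l : V) = (l : V) - π (l : V) := fun l => rfl
  set ψ : ↥L →ₗ[ℤ] (↥DM ⧸ Submodule.comap DM.subtype M) :=
    (Submodule.comap DM.subtype M).mkQ ∘ₗ πL with hψ'
  set φ : ↥L →ₗ[ℤ] (↥DK ⧸ Submodule.comap DK.subtype K) :=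
    (Submodule.comap DK.subtype K).mkQ ∘ₗ ρ with hφ'
  have hψval : ∀ l : ↥L, ψ l = Submodule.Quotient.mk (πL l) := fun l => rfl
  have hφval : ∀ l : ↥L, φ l = Submodule.Quotient.mk (ρ l) := fun l => rfl
  have hMK : ∀ l : ↥L, (π (l : V) ∈ M ↔ (l : V) - π (l : V) ∈ K) := by
    intro l
    constructor
    · intro h
      exact (hK _).mpr ⟨Submodule.sub_mem L l.2 (hML h),
        fun y hy => horth' y (Submodule.subset_span hy) _ (hπ'W' (l : V))⟩
    · intro h
      have hLmem : π (l : V) ∈ L := by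
        have heq : π (l : V) = (l : V) - ((l : V) - π (l : V)) := by abel
        rw [heq]; exact Submodule.sub_mem L l.2 (hKL h)
      exact hLWM _ hLmem (hπW _)
  have hker : LinearMap.ker ψ = LinearMap.ker φ := by
    ext l
    simp only [LinearMap.mem_ker, hψval, hφval, Submodule.Quotient.mk_eq_zero,
      Submodule.mem_comap, Submodule.coe_subtype, hπLval, hρval]
    exact hMK l
  have hKprim : ∀ x ∈ L, ∀ n : ℤ, n ≠ 0 → n • x ∈ K → x ∈ K := by
    intro x hx n hn hnx
    refine (hK x).mpr ⟨hx, fun y hy => ?_⟩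
    obtain ⟨-, h2⟩ := (hK _).mp hnx
    have h3 := h2 y hy
    rw [← Int.cast_smul_eq_zsmul ℚ, map_smul, LinearMap.smul_apply, smul_eq_mul] at h3
    exact (mul_eq_zero.mp h3).resolve_left (by exact_mod_cast hn)
  have hψsurj : Function.Surjective ψ := by
    intro q
    obtain ⟨x, rfl⟩ := Submodule.Quotient.mk_surjective _ q
    obtain ⟨l, hlL, hl⟩ := key_surj B hnd L hspan hfg hunimod M hML hMprim x.2
    have hπlx : π l = (x : V) := by
      have hd : π l - (x : V) ∈ W := Submodule.sub_mem W (hπW l) x.2.1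
      refine sub_eq_zero.mp (hMnd _ hd fun y hy => ?_)
      have e1 : B (l - π l) y = 0 := horth' y (Submodule.subset_span hy) _ (hπ'W' l)
      have e2 : B (l - (x : V)) y = 0 := hl y hy
      have e3 : B (π l - (x : V)) y = B (l - (x : V)) y - B (l - π l) y := by
        simp only [map_sub, LinearMap.sub_apply]; ring
      rw [e3, e1, e2, sub_zero]
    refine ⟨⟨l, hlL⟩, ?_⟩
    rw [hψval]
    exact congrArg Submodule.Quotient.mk
      (Subtype.ext (by rw [hπLval ⟨l, hlL⟩]; exact hπlx))
  have hW'nd : ∀ d ∈ W', (∀ z ∈ K, B d z = 0) → d = 0 := by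
    intro d hd hdz
    apply hnd
    intro u
    have hu : u ∈ W ⊔ W' := by rw [hcompl.sup_eq_top]; trivial
    obtain ⟨w, hw, w', hw', rfl⟩ := Submodule.mem_sup.mp hu
    have h1 : B d w = 0 := by rw [hsymm]; exact horth w hw d hd
    have h2 : B d w' = 0 := by
      have hle : W' ≤ LinearMap.ker (B d) := by
        rw [← hspanK]
        exact Submodule.span_le.mpr fun z hz => hdz z hz
      exact hle hw'
    rw [map_add, h1, h2, add_zero]
  have hφsurj : Function.Surjective φ := by
    intro q
    obtain ⟨y, rfl⟩ := Submodule.Quotient.mk_surjective _ q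
    obtain ⟨l, hlL, hl⟩ := key_surj B hnd L hspan hfg hunimod K hKL hKprim y.2
    have hy1 : (y : V) ∈ W' := by rw [← hspanK]; exact y.2.1
    have hρly : (l : V) - π l = (y : V) := by
      have hd : (l - π l) - (y : V) ∈ W' := Submodule.sub_mem W' (hπ'W' l) hy1
      refine sub_eq_zero.mp (hW'nd _ hd fun z hz => ?_)
      have e1 : B (π l) z = 0 := horth _ (hπW l) z (hKW' z hz)
      have e2 : B (l - (y : V)) z = 0 := hl z hz
      have e3 : B ((l - π l) - (y : V)) z = B (l - (y : V)) z - B (π l) z := by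
        simp only [map_sub, LinearMap.sub_apply]; ring
      rw [e3, e1, e2, sub_zero]
    refine ⟨⟨l, hlL⟩, ?_⟩
    rw [hφval]
    exact congrArg Submodule.Quotient.mk
      (Subtype.ext (by rw [hρval ⟨l, hlL⟩]; exact hρly))
  set eψ := ψ.quotKerEquivOfSurjective hψsurj with heψ
  set e0 := Submodule.quotEquivOfEq _ _ hker with he0
  set eφ := φ.quotKerEquivOfSurjective hφsurj with heφ
  set γₗ := (eψ.symm.trans e0).trans eφ with hγₗ
  have hγψ : ∀ l : ↥L, γₗ (ψ l) = φ l := by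
    intro l
    have h1 : eψ (Submodule.Quotient.mk l) = ψ l := rfl
    have h2 : eψ.symm (ψ l) = Submodule.Quotient.mk l := by
      rw [← h1, LinearEquiv.symm_apply_apply]
    have h3 : e0 (Submodule.Quotient.mk l) = Submodule.Quotient.mk l :=
      Submodule.quotEquivOfEq_mk _ _ hker l
    have h4 : eφ (Submodule.Quotient.mk l) = φ l := rfl
    rw [hγₗ, LinearEquiv.trans_apply, LinearEquiv.trans_apply, h2, h3, h4]
  have hiff : ∀ (x : ↥DM) (y : ↥DK),
      ((x : V) + (y : V) ∈ L ↔
        γₗ.toAddEquiv (Submodule.Quotient.mk x) = Submodule.Quotient.mk y) := by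
    intro x y
    constructor
    · intro h
      set l : ↥L := ⟨(x : V) + (y : V), h⟩ with hl
      have hy1 : (y : V) ∈ W' := by rw [← hspanK]; exact y.2.1
      have hπl : π (l : V) = (x : V) := by
        show π ((x : V) + (y : V)) = (x : V)
        rw [map_add, hπid _ x.2.1, hπ0 _ hy1, add_zero]
      have hψl : ψ l = Submodule.Quotient.mk x := by
        rw [hψval]
        exact congrArg Submodule.Quotient.mk
          (Subtype.ext (by rw [hπLval l]; exact hπl))
      have hφl : φ l = Submodule.Quotient.mk y := by
        rw [hφval]
        refine congrArg Submodule.Quotient.mk (Subtype.ext ?_)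
        rw [hρval l, hπl]
        show (x : V) + (y : V) - (x : V) = (y : V)
        abel
      show γₗ (Submodule.Quotient.mk x) = Submodule.Quotient.mk y
      rw [← hψl, hγψ, hφl]
    · intro h
      obtain ⟨l, hl⟩ := hψsurj (Submodule.Quotient.mk x)
      have h1 : π (l : V) - (x : V) ∈ M := by
        have := (Submodule.Quotient.eq _).mp (hψval l ▸ hl)
        simpa only [Submodule.mem_comap, Submodule.coe_subtype, AddSubgroupClass.coe_sub,
          hπLval] using this
      have h2 : φ l = Submodule.Quotient.mk y := by
        rw [← hγψ l, hl]; exact h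
      have h3 : ((l : V) - π (l : V)) - (y : V) ∈ K := by
        have := (Submodule.Quotient.eq _).mp (hφval l ▸ h2)
        simpa only [Submodule.mem_comap, Submodule.coe_subtype, AddSubgroupClass.coe_sub,
          hρval] using this
      have heq : (x : V) + (y : V) =
          (l : V) - (π (l : V) - (x : V)) - (((l : V) - π (l : V)) - (y : V)) := by abel
      rw [heq]
      exact Submodule.sub_mem L (Submodule.sub_mem L l.2 (hML h1)) (hKL h3)
  refine ⟨γₗ.toAddEquiv, fun x y h => ?_, hiff⟩
  have hxyL : (x : V) + (y : V) ∈ L := (hiff x y).mpr h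
  obtain ⟨n, hn⟩ := heven _ hxyL
  refine ⟨n, ?_⟩
  have hy1 : (y : V) ∈ W' := by rw [← hspanK]; exact y.2.1
  have hxy : B (x : V) (y : V) = 0 := horth _ x.2.1 _ hy1
  have hyx : B (y : V) (x : V) = 0 := by rw [hsymm]; exact hxy
  have hexp : B ((x : V) + (y : V)) ((x : V) + (y : V)) =
      B (x : V) (x : V) + B (x : V) (y : V) + B (y : V) (x : V) + B (y : V) (y : V) := by
    simp only [map_add, LinearMap.add_apply]; ring
  rw [hexp, hxy, hyx] at hn
  linarith
end

section
/- Let Γ be an even unimodular lattice, v ∈ Γ a primitive vector, and Λ ⊆ Γ a primitive sublattice orthogonal to v. Let K = Λ⊥ ∩ Γ, so v ∈ K. If Div_K(v) = 1 (i.e. v generates ℤ under the pairing with K), then the sublattice ℤv ⊕ Λ is primitively embedded in Γ. -/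
/-- If `v` is a primitive vector of an even unimodular lattice `Γ`, `Λ ⊆ Γ` a
primitive sublattice orthogonal to `v`, `K = Λ⊥ ∩ Γ`, and `Div_K(v) = 1`, then
`ℤv ⊕ Λ` is primitively embedded in `Γ`. -/
theorem divisor_one_implies_primitive_embedding
    {V : Type*} [AddCommGroup V] [Module ℚ V] [FiniteDimensional ℚ V]
    (B : V →ₗ[ℚ] V →ₗ[ℚ] ℚ)
    (hsymm : ∀ x y : V, B x y = B y x)
    (hnd : ∀ x : V, (∀ y : V, B x y = 0) → x = 0)
    (Γ : Submodule ℤ V)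
    (hspan : Submodule.span ℚ (Γ : Set V) = ⊤)
    (hfg : Γ.FG)
    (hint : ∀ x ∈ Γ, ∀ y ∈ Γ, ∃ n : ℤ, B x y = (n : ℚ))
    (heven : ∀ x ∈ Γ, ∃ n : ℤ, B x x = 2 * (n : ℚ))
    (hunimod : dualLat B Γ = Γ)
    (Λ : Submodule ℤ V) (hΛΓ : Λ ≤ Γ)
    (hΛprim : ∀ x ∈ Γ, ∀ n : ℤ, n ≠ 0 → n • x ∈ Λ → x ∈ Λ)
    (v : V) (hv : IsPrimitiveIn Γ v)
    (hvΛ : ∀ y ∈ Λ, B v y = 0)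
    (K : Submodule ℤ V)
    (hK : ∀ x : V, x ∈ K ↔ (x ∈ Γ ∧ ∀ y ∈ Λ, B x y = 0))
    -- `Div_K(v) = 1`, i.e. `v` pairs to `1` with some element of `K`:
    (hdiv : ∃ x ∈ K, B v x = 1) :
    ∀ x ∈ Γ, ∀ n : ℤ, n ≠ 0 →
      n • x ∈ (Submodule.span ℤ ({v} : Set V) ⊔ Λ) →
      x ∈ (Submodule.span ℤ ({v} : Set V) ⊔ Λ) := by
  intro x hx n hn hnx
  obtain ⟨w, hwK, hvw⟩ := hdiv
  obtain ⟨hwΓ, hwΛ⟩ := (hK w).mp hwK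
  obtain ⟨y, hy, z, hz, hyz⟩ := Submodule.mem_sup.mp hnx
  obtain ⟨a, rfl⟩ := Submodule.mem_span_singleton.mp hy
  -- pair with w
  obtain ⟨m, hm⟩ := hint x hx w hwΓ
  have hzw : B z w = 0 := by rw [hsymm]; exact hwΛ z hz
  have key : (a : ℚ) = (n : ℚ) * m := by
    have h1 : B ((n : ℤ) • x) w = B ((a : ℤ) • v + z) w := by rw [hyz]
    rw [map_add, LinearMap.add_apply, map_zsmul, map_zsmul, LinearMap.smul_apply,
      LinearMap.smul_apply, hvw, hzw, hm] at h1
    push_cast at h1 ⊢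
    simpa using h1.symm
  have ha : a = n * m := by exact_mod_cast key
  have hz' : z = n • (x - m • v) := by
    have : z = n • x - a • v := by rw [← hyz]; abel
    rw [this, ha, smul_sub, mul_smul]
  have hxm : x - m • v ∈ Γ := sub_mem hx (Submodule.smul_mem _ m hv.1)
  have hΛmem : x - m • v ∈ Λ := hΛprim _ hxm n hn (hz' ▸ hz)
  have : x = m • v + (x - m • v) := by abel
  rw [this]
  exact Submodule.add_mem _
    (Submodule.mem_sup_left (Submodule.mem_span_singleton.mpr ⟨m, rfl⟩))
    (Submodule.mem_sup_right hΛmem)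
end

section
/- Let Γ be an even unimodular lattice, Λ ⊆ Γ a primitive nondegenerate sublattice with orthogonal complement K = Λ⊥ ∩ Γ, and let v ∈ K be a primitive vector of K with Div_K(v) > 1. Then the sublattice ℤv ⊕ Λ is not primitively embedded in Γ: there exists λ ∈ Λ such that (v + λ)/Div_K(v) ∈ Γ but (v + λ)/Div_K(v) ∉ ℤv ⊕ Λ. -/
lemma clear_denom' {V : Type*} [AddCommGroup V] [Module ℚ V] (M : Submodule ℤ V) {x : V}
    (hx : x ∈ Submodule.span ℚ (M : Set V)) : ∃ N : ℤ, 0 < N ∧ (N : ℚ) • x ∈ M := by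
  induction hx using Submodule.span_induction with
  | mem y hy => exact ⟨1, one_pos, by simpa using hy⟩
  | zero => exact ⟨1, one_pos, by simp⟩
  | add x y _ _ ihx ihy =>
      obtain ⟨N, hN, hNx⟩ := ihx
      obtain ⟨N', hN', hNy⟩ := ihy
      refine ⟨N * N', mul_pos hN hN', ?_⟩
      have h1 : ((N * N' : ℤ) : ℚ) • (x + y) = N' • ((N:ℚ) • x) + N • ((N':ℚ) • y) := by
        rw [← Int.cast_smul_eq_zsmul ℚ N' ((N:ℚ) • x), ← Int.cast_smul_eq_zsmul ℚ N ((N':ℚ) • y),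
          smul_smul, smul_smul, smul_add]
        push_cast
        rw [mul_comm (N':ℚ) (N:ℚ)]
      rw [h1]
      exact M.add_mem (M.smul_mem _ hNx) (M.smul_mem _ hNy)
  | smul q x _ ih =>
      obtain ⟨N, hN, hNx⟩ := ih
      refine ⟨(q.den : ℤ) * N, mul_pos (by exact_mod_cast q.den_pos) hN, ?_⟩
      have hden : ((q.den : ℚ)) * q = (q.num : ℚ) := by
        have h0 : ((q.den : ℚ)) ≠ 0 := by exact_mod_cast q.den_ne_zero
        have h := Rat.num_div_den q
        have h' : (q.num : ℚ) = q * q.den := (div_eq_iff h0).1 h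
        rw [h']
        ring
      have h1 : (((q.den : ℤ) * N : ℤ) : ℚ) • (q • x) = q.num • ((N:ℚ) • x) := by
        rw [← Int.cast_smul_eq_zsmul ℚ q.num ((N:ℚ) • x), smul_smul, smul_smul]
        congr 1
        push_cast
        rw [mul_right_comm, hden]
      rw [h1]
      exact M.smul_mem _ hNx


/-- If `v ∈ K = Λ⊥ ∩ Γ` is a primitive vector with `Div_K(v) = d > 1`, then
`ℤv ⊕ Λ` is not primitively embedded in `Γ`: there exists `λ ∈ Λ` with
`(v + λ)/d ∈ Γ` but `(v + λ)/d ∉ ℤv ⊕ Λ`. -/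
theorem divisor_gt_one_implies_not_primitive
    {V : Type*} [AddCommGroup V] [Module ℚ V] [FiniteDimensional ℚ V]
    (B : V →ₗ[ℚ] V →ₗ[ℚ] ℚ)
    (hsymm : ∀ x y : V, B x y = B y x)
    (hnd : ∀ x : V, (∀ y : V, B x y = 0) → x = 0)
    (Γ : Submodule ℤ V)
    (hspan : Submodule.span ℚ (Γ : Set V) = ⊤)
    (hfg : Γ.FG)
    (hint : ∀ x ∈ Γ, ∀ y ∈ Γ, ∃ n : ℤ, B x y = (n : ℚ))
    (heven : ∀ x ∈ Γ, ∃ n : ℤ, B x x = 2 * (n : ℚ))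
    (hunimod : dualLat B Γ = Γ)
    (Λ : Submodule ℤ V) (hΛΓ : Λ ≤ Γ)
    (hΛprim : ∀ x ∈ Γ, ∀ n : ℤ, n ≠ 0 → n • x ∈ Λ → x ∈ Λ)
    (hΛnd : ∀ x ∈ Submodule.span ℚ (Λ : Set V), (∀ y ∈ Λ, B x y = 0) → x = 0)
    (K : Submodule ℤ V)
    (hK : ∀ x : V, x ∈ K ↔ (x ∈ Γ ∧ ∀ y ∈ Λ, B x y = 0))
    (v : V) (hv : IsPrimitiveIn K v)
    -- `Div_K(v) = d > 1`:
    (d : ℤ) (hd : 1 < d)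
    (hgen : ∃ x ∈ K, B v x = (d : ℚ))
    (hdvd : ∀ x ∈ K, ∃ k : ℤ, B v x = (k : ℚ) * (d : ℚ)) :
    ∃ lam ∈ Λ, ((d : ℚ)⁻¹ • (v + lam) ∈ Γ ∧
      (d : ℚ)⁻¹ • (v + lam) ∉ (Submodule.span ℤ ({v} : Set V) ⊔ Λ)) := by
  classical
  have hdQ : (0:ℚ) < (d:ℚ) := by exact_mod_cast lt_trans one_pos hd
  have hdne : (d:ℚ) ≠ 0 := ne_of_gt hdQ
  have hKΓ : ∀ x ∈ K, x ∈ Γ := fun x hx => ((hK x).1 hx).1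
  have hKΛ : ∀ x ∈ K, ∀ l ∈ Λ, B x l = 0 := fun x hx => ((hK x).1 hx).2
  set W : Submodule ℚ V := Submodule.span ℚ (Λ : Set V) with hWdef
  set U : Submodule ℚ V := Submodule.span ℚ (K : Set V) with hUdef
  have hUΛ : ∀ u ∈ U, ∀ l ∈ Λ, B u l = 0 := by
    intro u hu l hl
    have h : U ≤ LinearMap.ker (B.flip l) := Submodule.span_le.2 (fun x hx => by
      simp only [SetLike.mem_coe, LinearMap.mem_ker, LinearMap.flip_apply]
      exact hKΛ x hx l hl)
    simpa using h hu
  have hUW : ∀ u ∈ U, ∀ p ∈ W, B u p = 0 := by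
    intro u hu p hp
    have h : W ≤ LinearMap.ker (B u) := Submodule.span_le.2 (fun l hl => by
      simp only [SetLike.mem_coe, LinearMap.mem_ker]
      exact hUΛ u hu l hl)
    simpa using h hp
  have hβinj : Function.Injective (B : V →ₗ[ℚ] Module.Dual ℚ V) := by
    intro x y hxy
    have hz : ∀ z, B (x - y) z = 0 := fun z => by
      rw [map_sub, LinearMap.sub_apply, hxy, sub_self]
    exact sub_eq_zero.mp (hnd _ hz)
  have hβsurj : Function.Surjective (B : V →ₗ[ℚ] Module.Dual ℚ V) :=
    (LinearMap.injective_iff_surjective_of_finrank_eq_finrank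
      Subspace.dual_finrank_eq.symm).mp hβinj
  -- orthogonal projection to W
  have hproj : ∀ y : V, ∃ p ∈ W, ∀ x ∈ W, B p x = B y x := by
    intro y
    set BW := LinearMap.domRestrict₁₂ B W W with hBWdef
    have hBWinj : Function.Injective (BW : ↥W →ₗ[ℚ] Module.Dual ℚ ↥W) := by
      intro p q hpq
      have hz : ∀ l ∈ Λ, B ((p:V) - (q:V)) l = 0 := by
        intro l hl
        have h := congrArg (fun f => f ⟨l, Submodule.subset_span hl⟩) hpq
        simp only [hBWdef, LinearMap.domRestrict₁₂_apply] at h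
        rw [map_sub, LinearMap.sub_apply, h, sub_self]
      have h0 := hΛnd ((p:V) - (q:V)) (sub_mem p.2 q.2) hz
      exact Subtype.ext (sub_eq_zero.mp h0)
    have hBWsurj : Function.Surjective (BW : ↥W →ₗ[ℚ] Module.Dual ℚ ↥W) :=
      (LinearMap.injective_iff_surjective_of_finrank_eq_finrank
        Subspace.dual_finrank_eq.symm).mp hBWinj
    obtain ⟨p, hp⟩ := hBWsurj ((B y).domRestrict W)
    refine ⟨p, p.2, fun x hx => ?_⟩
    have h := congrArg (fun f => f ⟨x, hx⟩) hp
    simpa [hBWdef, LinearMap.domRestrict₁₂_apply] using h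
  -- every element of Γ lies in W ⊔ U
  have hΓWU : ∀ y ∈ Γ, y ∈ W ⊔ U := by
    intro y hy
    obtain ⟨p, hpW, hp⟩ := hproj y
    obtain ⟨N, hN, hNp⟩ := clear_denom' Λ hpW
    have hNy : (N:ℚ) • (y - p) ∈ K := by
      rw [hK]
      constructor
      · have h1 : (N:ℚ) • y - (N:ℚ) • p ∈ Γ := by
          refine sub_mem ?_ (hΛΓ hNp)
          rw [Int.cast_smul_eq_zsmul]
          exact Γ.smul_mem N hy
        simpa [smul_sub] using h1
      · intro l hl
        rw [map_smul, LinearMap.smul_apply, map_sub, LinearMap.sub_apply,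
          hp l (Submodule.subset_span hl), sub_self, smul_zero]
    have hyp : y - p ∈ U := by
      have hNne : (N:ℚ) ≠ 0 := by exact_mod_cast hN.ne'
      have h : y - p = (N:ℚ)⁻¹ • ((N:ℚ) • (y - p)) := by
        rw [smul_smul, inv_mul_cancel₀ hNne, one_smul]
      rw [h]
      exact Submodule.smul_mem _ _ (Submodule.subset_span hNy)
    exact Submodule.mem_sup.2 ⟨p, hpW, y - p, hyp, by abel⟩
  have hWUtop : W ⊔ U = ⊤ := by
    rw [eq_top_iff, ← hspan]
    exact Submodule.span_le.2 (fun y hy => hΓWU y hy)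
  -- vectors orthogonal to K lie in W
  have hperpW : ∀ z : V, (∀ x ∈ K, B z x = 0) → z ∈ W := by
    intro z hz
    have hzU : ∀ u ∈ U, B z u = 0 := by
      intro u hu
      have h : U ≤ LinearMap.ker (B z) := Submodule.span_le.2 (fun x hx => by
        simpa using hz x hx)
      simpa using h hu
    obtain ⟨p, hpW, u, huU, hy⟩ := Submodule.mem_sup.1
      (hWUtop ▸ Submodule.mem_top : z ∈ W ⊔ U)
    have hu0 : u = 0 := by
      apply hnd
      intro t
      obtain ⟨p', hp'W, u', hu'U, ht⟩ := Submodule.mem_sup.1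
        (hWUtop ▸ Submodule.mem_top : t ∈ W ⊔ U)
      have h1 : B u p' = 0 := hUW u huU p' hp'W
      have h2 : B u u' = 0 := by
        have hBpu' : B p u' = 0 := by
          rw [hsymm]
          exact hUW u' hu'U p hpW
        have hBzu' : B z u' = 0 := hzU u' hu'U
        have hsum : B p u' + B u u' = B z u' := by
          rw [← hy, map_add, LinearMap.add_apply]
        rw [hBpu', zero_add] at hsum
        rw [hsum, hBzu']
      rw [← ht, map_add, h1, h2, add_zero]
    rw [← hy, hu0, add_zero]
    exact hpW
  -- splitting of Γ over K
  haveI hfin : Module.Finite ℤ ↥Γ := Module.Finite.iff_fg.mpr hfg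
  set K' : Submodule ℤ ↥Γ := K.comap Γ.subtype with hK'def
  haveI : NoZeroSMulDivisors ℤ (↥Γ ⧸ K') := by
    refine ⟨fun {n q} hnq => ?_⟩
    by_cases hn : n = 0
    · exact Or.inl hn
    · right
      obtain ⟨y, rfl⟩ := Submodule.mkQ_surjective K' q
      have hmem : n • y ∈ K' := by
        rw [← Submodule.Quotient.mk_eq_zero, ← Submodule.mkQ_apply, map_smul, Submodule.mkQ_apply]
        exact hnq
      have hnK : (n : ℤ) • (y : V) ∈ K := hmem
      have hyK : (y : V) ∈ K := by
        rw [hK]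
        refine ⟨y.2, fun l hl => ?_⟩
        have h0 := ((hK _).1 hnK).2 l hl
        rw [← Int.cast_smul_eq_zsmul ℚ n (y : V), map_smul, LinearMap.smul_apply,
          smul_eq_mul, mul_eq_zero] at h0
        rcases h0 with h0 | h0
        · exact absurd (by exact_mod_cast h0) hn
        · exact h0
      rw [Submodule.mkQ_apply, Submodule.Quotient.mk_eq_zero]
      exact hyK
  haveI : Module.Free ℤ (↥Γ ⧸ K') := Module.free_of_finite_type_torsion_free'
  obtain ⟨h, hh⟩ := Module.projective_lifting_property K'.mkQ LinearMap.id
    (Submodule.mkQ_surjective K')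
  set σ : ↥Γ →ₗ[ℤ] ↥Γ := LinearMap.id - h ∘ₗ K'.mkQ with hσdef
  have hσK : ∀ y : ↥Γ, ((σ y : ↥Γ) : V) ∈ K := by
    intro y
    have h0 : σ y ∈ K' := by
      rw [← Submodule.Quotient.mk_eq_zero, ← Submodule.mkQ_apply]
      have h1 : K'.mkQ (σ y) = K'.mkQ y - K'.mkQ (h (K'.mkQ y)) := by
        simp [hσdef, map_sub]
      have h2 : K'.mkQ (h (K'.mkQ y)) = K'.mkQ y := by
        have := congrArg (fun f => f (K'.mkQ y)) hh
        simpa using this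
      rw [h1, h2, sub_self]
    exact h0
  have hσfix : ∀ (y : ↥Γ), (y : V) ∈ K → σ y = y := by
    intro y hy
    have h0 : K'.mkQ y = 0 := by
      rw [Submodule.mkQ_apply, Submodule.Quotient.mk_eq_zero]
      exact hy
    simp [hσdef, h0]
  -- the functional φ on Γ
  set φ : ↥Γ →ₗ[ℤ] ℚ :=
    (d:ℚ)⁻¹ • (((B v).restrictScalars ℤ) ∘ₗ (Γ.subtype ∘ₗ σ)) with hφdef
  have hφapply : ∀ y : ↥Γ, φ y = (d:ℚ)⁻¹ * B v ((σ y : ↥Γ) : V) := fun y => rfl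
  have hφint : ∀ y : ↥Γ, ∃ n : ℤ, φ y = (n:ℚ) := by
    intro y
    obtain ⟨k, hk⟩ := hdvd _ (hσK y)
    refine ⟨k, ?_⟩
    rw [hφapply, hk]
    field_simp
  have hφK : ∀ (x : V) (hx : x ∈ K), φ ⟨x, hKΓ x hx⟩ = (d:ℚ)⁻¹ * B v x := by
    intro x hx
    rw [hφapply, hσfix ⟨x, hKΓ x hx⟩ hx]
  -- extend φ to a rational functional ψ on V
  obtain ⟨b, hbΓ, hbspan, hbind⟩ := exists_linearIndependent ℚ (Γ : Set V)
  have hbtop : Submodule.span ℚ b = ⊤ := by rw [hbspan, hspan]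
  let bs : Module.Basis b ℚ V := Module.Basis.mk hbind (by rw [Subtype.range_val, hbtop])
  set ψ : V →ₗ[ℚ] ℚ := bs.constr ℚ (fun i => φ ⟨(i : V), hbΓ i.2⟩) with hψdef
  have hψb : ∀ i : b, ψ (i : V) = φ ⟨(i : V), hbΓ i.2⟩ := by
    intro i
    have h0 : bs i = (i : V) := Module.Basis.mk_apply _ _ _
    calc ψ (i : V) = ψ (bs i) := by rw [h0]
      _ = φ ⟨(i : V), hbΓ i.2⟩ := bs.constr_basis ℚ _ i
  set M₀ : Submodule ℤ V := Submodule.span ℤ b with hM₀def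
  have hM₀Γ : M₀ ≤ (Γ.restrictScalars ℤ) := Submodule.span_le.2 hbΓ
  have hagree : ∀ x ∈ M₀, ∀ (hxΓ : x ∈ Γ), ψ x = φ ⟨x, hxΓ⟩ := by
    intro x hx
    induction hx using Submodule.span_induction with
    | mem y hy =>
        intro hyΓ
        exact hψb ⟨y, hy⟩
    | zero =>
        intro h0
        rw [map_zero, show ((⟨0, h0⟩ : ↥Γ)) = 0 from rfl, map_zero]
    | add x y hxm hym ihx ihy =>
        intro hΓ'
        have hxΓ := hM₀Γ hxm
        have hyΓ := hM₀Γ hym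
        rw [map_add, ihx hxΓ, ihy hyΓ,
          show ((⟨x + y, hΓ'⟩ : ↥Γ)) = ⟨x, hxΓ⟩ + ⟨y, hyΓ⟩ from rfl, map_add]
    | smul n x hxm ihx =>
        intro hΓ'
        have hxΓ := hM₀Γ hxm
        rw [map_zsmul, ihx hxΓ,
          show ((⟨n • x, hΓ'⟩ : ↥Γ)) = n • (⟨x, hxΓ⟩ : ↥Γ) from rfl, map_zsmul]
  have hψΓ : ∀ (y : V) (hy : y ∈ Γ), ψ y = φ ⟨y, hy⟩ := by
    intro y hy
    have hyU : y ∈ Submodule.span ℚ (M₀ : Set V) := by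
      rw [hM₀def]
      rw [Submodule.span_span_of_tower ℤ ℚ, hbtop]
      trivial
    obtain ⟨N, hN, hNy⟩ := clear_denom' M₀ hyU
    have hNΓ : (N:ℚ) • y ∈ Γ := hM₀Γ hNy
    have h1 : ψ ((N:ℚ) • y) = φ ⟨(N:ℚ) • y, hNΓ⟩ := hagree _ hNy hNΓ
    have h2 : ((⟨(N:ℚ) • y, hNΓ⟩ : ↥Γ)) = N • (⟨y, hy⟩ : ↥Γ) := by
      apply Subtype.ext
      simp [Int.cast_smul_eq_zsmul]
    rw [map_smul, smul_eq_mul, h2, map_zsmul, zsmul_eq_mul] at h1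
    have hNne : (N:ℚ) ≠ 0 := by exact_mod_cast hN.ne'
    exact mul_left_cancel₀ hNne h1
  -- represent ψ by w ∈ Γ
  obtain ⟨w, hw⟩ := hβsurj ψ
  have hwapp : ∀ y : V, B w y = ψ y := fun y => by rw [hw]
  have hwΓ : w ∈ Γ := by
    rw [← hunimod]
    refine ⟨?_, ?_⟩
    · rw [hspan]; trivial
    · intro y hy
      obtain ⟨n, hn⟩ := hφint ⟨y, hy⟩
      exact ⟨n, by rw [hwapp, hψΓ y hy, hn]⟩
  have hwK : ∀ x ∈ K, B w x = (d:ℚ)⁻¹ * B v x := by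
    intro x hx
    rw [hwapp, hψΓ x (hKΓ x hx), hφK x hx]
  -- construct lam
  set z : V := w - (d:ℚ)⁻¹ • v with hzdef
  have hzW : z ∈ W := by
    apply hperpW
    intro x hx
    rw [hzdef, map_sub, LinearMap.sub_apply, map_smul, LinearMap.smul_apply,
      hwK x hx, smul_eq_mul, sub_self]
  set lam : V := d • w - v with hlamdef
  have hlamΓ : lam ∈ Γ := sub_mem (Γ.smul_mem d hwΓ) (hKΓ v hv.1)
  have hlamW : lam ∈ W := by
    have h0 : lam = (d:ℚ) • z := by
      rw [hzdef, hlamdef, smul_sub, smul_smul, mul_inv_cancel₀ hdne, one_smul,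
        Int.cast_smul_eq_zsmul]
    rw [h0]
    exact W.smul_mem _ hzW
  obtain ⟨N, hN, hNlam⟩ := clear_denom' Λ hlamW
  have hlamΛ : lam ∈ Λ := hΛprim lam hlamΓ N (by exact_mod_cast hN.ne')
    (by rwa [Int.cast_smul_eq_zsmul] at hNlam)
  have hkey : (d : ℚ)⁻¹ • (v + lam) = w := by
    have h0 : v + lam = (d:ℚ) • w := by
      rw [hlamdef, Int.cast_smul_eq_zsmul]
      abel
    rw [h0, smul_smul, inv_mul_cancel₀ hdne, one_smul]
  refine ⟨lam, hlamΛ, ?_, ?_⟩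
  · rw [hkey]
    exact hwΓ
  · rw [hkey]
    intro hmem
    obtain ⟨s, hs, l, hl, hsl⟩ := Submodule.mem_sup.1 hmem
    obtain ⟨a, rfl⟩ := Submodule.mem_span_singleton.1 hs
    obtain ⟨x₀, hx₀K, hx₀⟩ := hgen
    have h1 : B w x₀ = 1 := by rw [hwK x₀ hx₀K, hx₀, inv_mul_cancel₀ hdne]
    have h2 : B w x₀ = (a:ℚ) * (d:ℚ) := by
      rw [← hsl, map_add, LinearMap.add_apply]
      have hBl : B l x₀ = 0 := by
        rw [hsymm]
        exact hKΛ x₀ hx₀K l hl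
      rw [hBl, add_zero, ← Int.cast_smul_eq_zsmul ℚ a v, map_smul,
        LinearMap.smul_apply, hx₀, smul_eq_mul]
    rw [h1] at h2
    have h3 : (a * d : ℤ) = 1 := by exact_mod_cast h2.symm
    have h4 : d ∣ 1 := ⟨a, by rw [← h3]; ring⟩
    have h5 := Int.le_of_dvd one_pos h4
    omega
end

section
/- Conversely to the above: let Γ be an even lattice, v ∈ Γ primitive with v² = 2n-2 > 0, and v' ∈ Γ with 0 ≤ (v')²·v² < (v,v')² ≤ (v²/2)² and (v,v') ≥ 0. Write v' = α·v + β·x where x generates v⊥ ∩ M for M the rank-2 primitive sublattice containing v and v', α = (v,v')/v², β = (x,v')/x². Then 0 ≤ α ≤ 1/2, and setting v'' = v - v', one has (v')² ≥ 0, (v'')² ≥ (v')² ≥ 0, and for any positive-definite subspace Z with v ∈ Z and Z ⊥ x: v'_+ = α·v, v''_+ = (1-α)·v, so |v_+| = |v'_+| + |v''_+|. -/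
/-- Converse: if `0 ≤ (v')²v² < (v,v')² ≤ (v²/2)²` and `(v,v') ≥ 0`, with
`v' = α·v + β·x` for `x` a generator of `v⊥` in the plane of `v, v'`
(`α = (v,v')/v²`, `β = (x,v')/x²`), then `0 ≤ α ≤ 1/2`, `(v')² ≥ 0`,
`(v'')² ≥ (v')²` for `v'' = v - v'`, and for any positive definite subspace
`Z ∋ v` with `Z ⊥ x`: `v'₊ = α·v`, `v''₊ = (1-α)·v`, so
`|v₊| = |v'₊| + |v''₊|`. -/
theorem decay_inequalities_converse
    {V : Type*} [AddCommGroup V] [Module ℝ V]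
    (B : V →ₗ[ℝ] V →ₗ[ℝ] ℝ)
    (hsymm : ∀ x y : V, B x y = B y x)
    (v v' x : V)
    (n : ℤ) (hvv : B v v = 2 * (n : ℝ) - 2) (hpos : 0 < B v v)
    (h1 : 0 ≤ B v' v' * B v v)
    (h2 : B v' v' * B v v < (B v v') ^ 2)
    (h3 : (B v v') ^ 2 ≤ (B v v / 2) ^ 2)
    (h4 : 0 ≤ B v v')
    (hxv : B v x = 0) (hxx : B x x < 0)
    (hdec : v' = (B v v' / B v v) • v + (B x v' / B x x) • x)
    (Z : Submodule ℝ V)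
    (hZpos : ∀ z ∈ Z, z ≠ 0 → 0 < B z z)
    (hvZ : v ∈ Z) (hZx : ∀ z ∈ Z, B z x = 0)
    -- `P` is the orthogonal projection onto `Z`:
    (P : V →ₗ[ℝ] V)
    (hPmem : ∀ y : V, P y ∈ Z)
    (hPorth : ∀ y : V, ∀ z ∈ Z, B (y - P y) z = 0) :
    0 ≤ B v v' / B v v ∧
    B v v' / B v v ≤ 1 / 2 ∧
    0 ≤ B v' v' ∧
    B v' v' ≤ B (v - v') (v - v') ∧
    P v' = (B v v' / B v v) • v ∧
    P (v - v') = (1 - B v v' / B v v) • v ∧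
    Real.sqrt (B (P v) (P v)) =
      Real.sqrt (B (P v') (P v')) +
      Real.sqrt (B (P (v - v')) (P (v - v'))) := by
  set α := B v v' / B v v with hα
  have hvv2 : B v v' ≤ B v v / 2 := by nlinarith [sq_nonneg (B v v' - B v v / 2)]
  have hα0 : 0 ≤ α := div_nonneg h4 hpos.le
  have hα12 : α ≤ 1 / 2 := by
    rw [hα, div_le_div_iff₀ hpos (by norm_num)]
    linarith
  have hv'v' : 0 ≤ B v' v' := by nlinarith
  have hsub : B (v - v') (v - v') = B v v - 2 * B v v' + B v' v' := by
    simp [map_sub, LinearMap.sub_apply, hsymm v' v]; ring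
  have hineq : B v' v' ≤ B (v - v') (v - v') := by rw [hsub]; linarith
  -- P v = v
  have hPv : P v = v := by
    have hmem : v - P v ∈ Z := Z.sub_mem hvZ (hPmem v)
    have h0 : B (v - P v) (v - P v) = 0 := hPorth v _ hmem
    by_contra hne
    have : v - P v ≠ 0 := fun h => hne (by rw [eq_comm, ← sub_eq_zero]; exact h)
    exact absurd h0 (ne_of_gt (hZpos _ hmem this))
  -- P x = 0
  have hPx : P x = 0 := by
    have h1' : B (x - P x) (P x) = 0 := hPorth x _ (hPmem x)
    have h2' : B (P x) x = 0 := hZx _ (hPmem x)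
    have h0 : B (P x) (P x) = 0 := by
      have := hsymm (P x) x
      simp [map_sub, LinearMap.sub_apply] at h1'
      linarith
    by_contra hne
    exact absurd h0 (ne_of_gt (hZpos _ (hPmem x) hne))
  have hPv' : P v' = α • v := by
    rw [hdec]; simp [hPv, hPx]
  have hPv'' : P (v - v') = (1 - α) • v := by
    rw [map_sub, hPv, hPv', sub_smul, one_smul]
  refine ⟨hα0, hα12, hv'v', hineq, hPv', hPv'', ?_⟩
  have h1α : 0 ≤ 1 - α := by linarith
  rw [hPv, hPv', hPv'']
  have hBs : ∀ c : ℝ, B (c • v) (c • v) = c ^ 2 * B v v := by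
    intro c; simp [map_smul]; ring
  rw [hBs, hBs]
  rw [show (α : ℝ) ^ 2 * B v v = α ^ 2 * B v v from rfl]
  rw [Real.sqrt_mul (sq_nonneg α), Real.sqrt_mul (sq_nonneg (1 - α)),
    Real.sqrt_sq hα0, Real.sqrt_sq h1α]
  have : α * Real.sqrt (B v v) + (1 - α) * Real.sqrt (B v v)
      = Real.sqrt (B v v) := by ring
  rw [this]
end

section
/- Let G be a finite group acting faithfully by isometries on an even unimodular lattice Γ, with invariant lattice Γ^G = {x : g(x)=x ∀g} and coinvariant lattice Γ_G = (Γ^G)⊥ ∩ Γ. Then the induced action of G on the discriminant group (Γ_G)*/Γ_G is trivial. -/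
/-- For a finite group `G` of isometries of an even unimodular lattice `Γ`, the
induced action of `G` on the discriminant group `(Γ_G)*/Γ_G` of the coinvariant
lattice `Γ_G = (Γ^G)⊥ ∩ Γ` is trivial: `g x - x ∈ Γ_G` for every `g ∈ G` and every
`x` in the dual lattice `(Γ_G)*`. -/
theorem trivial_action_on_coinvariant_discriminant
    {V : Type*} [AddCommGroup V] [Module ℚ V] [FiniteDimensional ℚ V]
    (B : V →ₗ[ℚ] V →ₗ[ℚ] ℚ)
    (hsymm : ∀ x y : V, B x y = B y x)
    (hnd : ∀ x : V, (∀ y : V, B x y = 0) → x = 0)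
    (Γ : Submodule ℤ V)
    (hspan : Submodule.span ℚ (Γ : Set V) = ⊤)
    (hfg : Γ.FG)
    (hint : ∀ x ∈ Γ, ∀ y ∈ Γ, ∃ n : ℤ, B x y = (n : ℚ))
    (heven : ∀ x ∈ Γ, ∃ n : ℤ, B x x = 2 * (n : ℚ))
    (hunimod : dualLat B Γ = Γ)
    (G : Subgroup (V ≃ₗ[ℚ] V))
    (hGfin : (G : Set (V ≃ₗ[ℚ] V)).Finite)
    (hGΓ : ∀ g ∈ G, ∀ x ∈ Γ, g x ∈ Γ)
    (hGB : ∀ g ∈ G, ∀ x y : V, B (g x) (g y) = B x y)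
    -- `C` is the coinvariant lattice `Γ_G = (Γ^G)⊥ ∩ Γ`:
    (C : Set V)
    (hC : C = {x : V | x ∈ Γ ∧ ∀ y : V, (y ∈ Γ ∧ ∀ g ∈ G, g y = y) → B x y = 0}) :
    ∀ g ∈ G, ∀ x : V,
      x ∈ Submodule.span ℚ C → (∀ y ∈ C, ∃ k : ℤ, B x y = (k : ℚ)) →
      g x - x ∈ C := by
  intro g hg x hxspan hxdual
  have hginv : g⁻¹ ∈ G := G.inv_mem hg
  have hgg : ∀ z : V, g ((g⁻¹ : V ≃ₗ[ℚ] V) z) = z := fun z => g.apply_symm_apply z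
  have key : ∀ z : V, B (g x - x) z = B x ((g⁻¹ : V ≃ₗ[ℚ] V) z - z) := by
    intro z
    have h1 : B (g x) z = B x ((g⁻¹ : V ≃ₗ[ℚ] V) z) := by
      have := hGB g hg x ((g⁻¹ : V ≃ₗ[ℚ] V) z)
      rw [hgg z] at this
      exact this
    rw [map_sub, LinearMap.sub_apply, map_sub, h1]
  rw [hC]
  refine ⟨?_, ?_⟩
  · -- g x - x ∈ Γ, via unimodularity
    rw [← hunimod]
    refine ⟨by rw [hspan]; trivial, ?_⟩
    intro z hz
    have hzC : (g⁻¹ : V ≃ₗ[ℚ] V) z - z ∈ C := by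
      rw [hC]
      refine ⟨Γ.sub_mem (hGΓ _ hginv z hz) hz, ?_⟩
      rintro y ⟨hyΓ, hyfix⟩
      have h1 : B ((g⁻¹ : V ≃ₗ[ℚ] V) z) y = B z y := by
        have := hGB g hg ((g⁻¹ : V ≃ₗ[ℚ] V) z) y
        rw [hgg z, hyfix g hg] at this
        exact this.symm
      rw [map_sub, LinearMap.sub_apply, h1, sub_self]
    obtain ⟨k, hk⟩ := hxdual _ hzC
    exact ⟨k, by rw [key z]; exact hk⟩
  · -- orthogonal to invariants
    rintro y ⟨hyΓ, hyfix⟩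
    rw [key y, hyfix g⁻¹ hginv, sub_self, map_zero]
end

section
/- Let Γ be an even unimodular lattice, Z ⊆ Γ ⊗ ℝ a subspace, L_Π = Γ ∩ Z⊥ and L^Π = Γ ∩ (L_Π)⊥ (both primitive sublattices, orthogonal complements of each other, with L_Π nondegenerate). Then the subgroup G of O(Γ) fixing Z pointwise is isomorphic to the group O⁰(L_Π) of automorphisms of L_Π acting trivially on the discriminant group (L_Π)*/L_Π. -/
/-- `g` is an automorphism of the unimodular lattice `Γ` preserving the bilinear
form and fixing the subspace `Z` pointwise. -/
def StabCond {V : Type*} [AddCommGroup V] [Module ℚ V]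
    (B : V →ₗ[ℚ] V →ₗ[ℚ] ℚ) (Γ : Submodule ℤ V) (Z : Submodule ℚ V)
    (g : V ≃ₗ[ℚ] V) : Prop :=
  (∀ x ∈ Γ, g x ∈ Γ) ∧ (∀ x ∈ Γ, g.symm x ∈ Γ) ∧
  (∀ x y : V, B (g x) (g y) = B x y) ∧ (∀ z ∈ Z, g z = z)

/-- `h` is an automorphism of the lattice `LPi` (realised on its rational span `W`)
preserving the form and acting trivially on the discriminant group `LPi*/LPi`,
i.e. `h ∈ O⁰(L_Π)`. -/
def DiscTrivCond {V : Type*} [AddCommGroup V] [Module ℚ V]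
    (B : V →ₗ[ℚ] V →ₗ[ℚ] ℚ) (LPi : Submodule ℤ V) (W : Submodule ℚ V)
    (h : ↥W ≃ₗ[ℚ] ↥W) : Prop :=
  (∀ x : ↥W, (↑x : V) ∈ LPi → (↑(h x) : V) ∈ LPi) ∧
  (∀ x : ↥W, (↑x : V) ∈ LPi → (↑(h.symm x) : V) ∈ LPi) ∧
  (∀ x y : ↥W, B (↑(h x) : V) (↑(h y) : V) = B (↑x : V) (↑y : V)) ∧
  (∀ x : ↥W, (∀ y ∈ LPi, ∃ k : ℤ, B (↑x : V) y = (k : ℚ)) →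
    (↑(h x) : V) - (↑x : V) ∈ LPi)

section AuxE
variable {V : Type*} [AddCommGroup V] [Module ℚ V]

/-- Restriction of a linear automorphism preserving a submodule. -/
def restrEquiv (W : Submodule ℚ V) (g : V ≃ₗ[ℚ] V)
    (h1 : ∀ v ∈ W, g v ∈ W) (h2 : ∀ v ∈ W, g.symm v ∈ W) : ↥W ≃ₗ[ℚ] ↥W where
  toFun x := ⟨g x, h1 x x.2⟩
  invFun x := ⟨g.symm x, h2 x x.2⟩
  map_add' x y := by ext; simp
  map_smul' c x := by ext; simp
  left_inv x := by ext; simp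
  right_inv x := by ext; simp

@[simp] theorem restrEquiv_apply (W : Submodule ℚ V) (g : V ≃ₗ[ℚ] V)
    (h1 : ∀ v ∈ W, g v ∈ W) (h2 : ∀ v ∈ W, g.symm v ∈ W) (x : ↥W) :
    (restrEquiv W g h1 h2 x : V) = g x := rfl

@[simp] theorem restrEquiv_symm_apply (W : Submodule ℚ V) (g : V ≃ₗ[ℚ] V)
    (h1 : ∀ v ∈ W, g v ∈ W) (h2 : ∀ v ∈ W, g.symm v ∈ W) (x : ↥W) :
    ((restrEquiv W g h1 h2).symm x : V) = g.symm x := rfl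

theorem exists_decomp {W Z : Submodule ℚ V} (hc : IsCompl W Z) (v : V) :
    ∃ (w : ↥W) (z : ↥Z), v = ↑w + ↑z := by
  have hv : v ∈ W ⊔ Z := by rw [hc.sup_eq_top]; trivial
  obtain ⟨w, hw, z, hz, h⟩ := Submodule.mem_sup.1 hv
  exact ⟨⟨w, hw⟩, ⟨z, hz⟩, h.symm⟩

/-- Extension of an automorphism of `W` by the identity on `Z`, where `V = W ⊕ Z`. -/
noncomputable def extEquiv (W Z : Submodule ℚ V) (hc : IsCompl W Z) (h : ↥W ≃ₗ[ℚ] ↥W) :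
    V ≃ₗ[ℚ] V :=
  (Submodule.prodEquivOfIsCompl W Z hc).symm.trans
    ((h.prodCongr (LinearEquiv.refl ℚ ↥Z)).trans (Submodule.prodEquivOfIsCompl W Z hc))

@[simp] theorem extEquiv_apply_left (W Z : Submodule ℚ V) (hc : IsCompl W Z)
    (h : ↥W ≃ₗ[ℚ] ↥W) (w : ↥W) : extEquiv W Z hc h ↑w = ↑(h w) := by
  simp [extEquiv, Submodule.prodEquivOfIsCompl_symm_apply_left,
    Submodule.coe_prodEquivOfIsCompl', LinearEquiv.prodCongr_apply]

@[simp] theorem extEquiv_apply_right (W Z : Submodule ℚ V) (hc : IsCompl W Z)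
    (h : ↥W ≃ₗ[ℚ] ↥W) (z : ↥Z) : extEquiv W Z hc h ↑z = ↑z := by
  simp [extEquiv, Submodule.prodEquivOfIsCompl_symm_apply_right,
    Submodule.coe_prodEquivOfIsCompl', LinearEquiv.prodCongr_apply]

theorem extEquiv_symm (W Z : Submodule ℚ V) (hc : IsCompl W Z) (h : ↥W ≃ₗ[ℚ] ↥W) :
    (extEquiv W Z hc h).symm = extEquiv W Z hc h.symm := by
  ext v
  obtain ⟨w, z, rfl⟩ := exists_decomp hc v
  apply (extEquiv W Z hc h).injective
  rw [LinearEquiv.apply_symm_apply, map_add, extEquiv_apply_right, extEquiv_apply_left,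
    map_add, extEquiv_apply_right, extEquiv_apply_left, LinearEquiv.apply_symm_apply]

theorem represent_functional {V : Type*} [AddCommGroup V] [Module ℚ V] [FiniteDimensional ℚ V]
    (B : V →ₗ[ℚ] V →ₗ[ℚ] ℚ) (hnd : ∀ x : V, (∀ y : V, B x y = 0) → x = 0)
    (Γ : Submodule ℤ V) (hspan : Submodule.span ℚ (Γ : Set V) = ⊤) (hfg : Γ.FG)
    (F : ↥Γ →ₗ[ℤ] ℚ) : ∃ v : V, ∀ γ : ↥Γ, B v ↑γ = F γ := by
  haveI : Module.Finite ℤ ↥Γ := Module.Finite.iff_fg.2 hfg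
  haveI : IsAddTorsionFree V := IsAddTorsionFree.of_module_rat V
  haveI : Module.Free ℤ ↥Γ := Module.free_of_finite_type_torsion_free'
  set bZ := Module.Free.chooseBasis ℤ ↥Γ with hbZ
  set b : Module.Free.ChooseBasisIndex ℤ ↥Γ → V := fun i => ↑(bZ i) with hb
  have hbi : LinearIndependent ℚ b := by
    rw [← LinearIndependent.iff_fractionRing ℤ ℚ]
    exact bZ.linearIndependent.map' Γ.subtype (Submodule.ker_subtype Γ)
  have hcoe : ∀ γ : ↥Γ, (γ : V) ∈ Submodule.span ℚ (Set.range b) := by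
    intro γ
    have hγ : γ ∈ Submodule.span ℤ (Set.range ⇑bZ) := by rw [bZ.span_eq]; trivial
    induction hγ using Submodule.span_induction with
    | mem x hx =>
      obtain ⟨i, rfl⟩ := hx
      exact Submodule.subset_span ⟨i, rfl⟩
    | zero => simp
    | add x y _ _ hx hy => push_cast; exact Submodule.add_mem _ hx hy
    | smul n x _ hx =>
      have : ((n • x : ↥Γ) : V) = ((n : ℚ)) • (x : V) := by
        push_cast
        rw [Int.cast_smul_eq_zsmul]
      rw [this]
      exact Submodule.smul_mem _ _ hx
  have hbs : ⊤ ≤ Submodule.span ℚ (Set.range b) := by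
    rw [← hspan]
    refine Submodule.span_le.2 ?_
    rintro x hx
    exact hcoe ⟨x, hx⟩
  set bQ : Module.Basis _ ℚ V := Module.Basis.mk hbi hbs with hbQ
  set ψ : V →ₗ[ℚ] ℚ := bQ.constr ℚ (fun i => F (bZ i)) with hψ
  refine ⟨(LinearMap.BilinForm.toDual B (LinearMap.BilinForm.Nondegenerate.ofSeparatingLeft hnd)).symm ψ, ?_⟩
  have hv : ∀ u : V, B ((LinearMap.BilinForm.toDual B (LinearMap.BilinForm.Nondegenerate.ofSeparatingLeft hnd)).symm ψ) u = ψ u := fun u =>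
    LinearMap.BilinForm.apply_toDual_symm_apply ψ u
  have key : (LinearMap.restrictScalars ℤ (B ((LinearMap.BilinForm.toDual B (LinearMap.BilinForm.Nondegenerate.ofSeparatingLeft hnd)).symm ψ))).comp
      Γ.subtype = F := by
    refine bZ.ext fun i => ?_
    show B ((LinearMap.BilinForm.toDual B (LinearMap.BilinForm.Nondegenerate.ofSeparatingLeft hnd)).symm ψ) ((bZ i : V)) = F (bZ i)
    rw [hv]
    have : (bZ i : V) = bQ i := by rw [hbQ, Module.Basis.mk_apply]
    rw [this, hψ, Module.Basis.constr_basis]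
  intro γ
  exact LinearMap.congr_fun key γ

theorem exists_retraction {V : Type*} [AddCommGroup V] [Module ℚ V]
    (Γ : Submodule ℤ V) (hfg : Γ.FG) (LPi : Submodule ℤ V) (W : Submodule ℚ V)
    (hcap : ∀ v ∈ Γ, v ∈ W → v ∈ LPi) (hWle : ∀ x ∈ LPi, x ∈ W) :
    ∃ r : ↥Γ →ₗ[ℤ] V, (∀ γ : ↥Γ, r γ ∈ LPi) ∧ (∀ γ : ↥Γ, (γ : V) ∈ LPi → r γ = γ) := by
  haveI : Module.Finite ℤ ↥Γ := Module.Finite.iff_fg.2 hfg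
  set LPi' : Submodule ℤ ↥Γ := LPi.comap Γ.subtype with hLPi'
  haveI : NoZeroSMulDivisors ℤ (↥Γ ⧸ LPi') := by
    refine ⟨fun {n x} h => ?_⟩
    by_cases hn : n = 0
    · exact Or.inl hn
    right
    obtain ⟨γ, rfl⟩ := Submodule.Quotient.mk_surjective _ x
    rw [← Submodule.Quotient.mk_smul, Submodule.Quotient.mk_eq_zero] at h
    rw [Submodule.Quotient.mk_eq_zero]
    have hmem : ((n • γ : ↥Γ) : V) ∈ LPi := h
    have hmemW : ((n • γ : ↥Γ) : V) ∈ W := hWle _ hmem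
    have hcoe : ((n • γ : ↥Γ) : V) = (n : ℚ) • (γ : V) := by
      push_cast; rw [Int.cast_smul_eq_zsmul]
    rw [hcoe] at hmemW
    have hγW : (γ : V) ∈ W := by
      have := W.smul_mem ((n : ℚ)⁻¹) hmemW
      rwa [inv_smul_smul₀ (by exact_mod_cast hn)] at this
    exact hcap _ γ.2 hγW
  haveI : Module.Free ℤ (↥Γ ⧸ LPi') := Module.free_of_finite_type_torsion_free'
  obtain ⟨s, hs⟩ := Module.projective_lifting_property LPi'.mkQ LinearMap.id
    (Submodule.Quotient.mk_surjective _)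
  refine ⟨Γ.subtype.comp (LinearMap.id - s.comp LPi'.mkQ), fun γ => ?_, fun γ hγ => ?_⟩
  · have : (γ - s (LPi'.mkQ γ)) ∈ LPi' := by
      rw [← Submodule.Quotient.mk_eq_zero (p := LPi')]
      have h1 : LPi'.mkQ (s (LPi'.mkQ γ)) = LPi'.mkQ γ := LinearMap.congr_fun hs (LPi'.mkQ γ)
      rw [← LPi'.mkQ_apply, map_sub, h1, sub_self]
    exact this
  · have h0 : LPi'.mkQ γ = 0 := (Submodule.Quotient.mk_eq_zero _).2 hγ
    simp [h0]

end AuxE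

/-- The group of symmetries of `Γ` fixing `Z` pointwise is isomorphic to the group
`O⁰(L_Π)` of automorphisms of `L_Π = Γ ∩ Z⊥` acting trivially on the discriminant
group `(L_Π)*/L_Π`; the isomorphism is given by restriction to `L_Π` and is
compatible with composition. -/
theorem stabilizer_iso_discriminant_trivial_automorphisms
    {V : Type*} [AddCommGroup V] [Module ℚ V] [FiniteDimensional ℚ V]
    (B : V →ₗ[ℚ] V →ₗ[ℚ] ℚ)
    (hsymm : ∀ x y : V, B x y = B y x)
    (hnd : ∀ x : V, (∀ y : V, B x y = 0) → x = 0)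
    (Γ : Submodule ℤ V)
    (hspan : Submodule.span ℚ (Γ : Set V) = ⊤)
    (hfg : Γ.FG)
    (hint : ∀ x ∈ Γ, ∀ y ∈ Γ, ∃ n : ℤ, B x y = (n : ℚ))
    (heven : ∀ x ∈ Γ, ∃ n : ℤ, B x x = 2 * (n : ℚ))
    (hunimod : dualLat B Γ = Γ)
    (Z : Submodule ℚ V)
    (LPi Lup : Submodule ℤ V)
    -- `L_Π = Γ ∩ Z⊥` and `L^Π = Γ ∩ (L_Π)⊥`:
    (hLPi : ∀ x : V, x ∈ LPi ↔ (x ∈ Γ ∧ ∀ z ∈ Z, B x z = 0))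
    (hLup : ∀ x : V, x ∈ Lup ↔ (x ∈ Γ ∧ ∀ y ∈ LPi, B x y = 0))
    -- `Z ⊆ L^Π ⊗ ℝ`; `L_Π` nondegenerate; `L_Π` and `L^Π` mutual complements:
    (hZW : Z ≤ Submodule.span ℚ (Lup : Set V))
    (hLPind : ∀ x ∈ Submodule.span ℚ (LPi : Set V), (∀ y ∈ LPi, B x y = 0) → x = 0)
    (hmut : ∀ x : V, x ∈ LPi ↔ (x ∈ Γ ∧ ∀ y ∈ Lup, B x y = 0))
    (W : Submodule ℚ V) (hW : W = Submodule.span ℚ (LPi : Set V)) :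
    ∃ Φ : {g : V ≃ₗ[ℚ] V // StabCond B Γ Z g} ≃
          {h : ↥W ≃ₗ[ℚ] ↥W // DiscTrivCond B LPi W h},
      (∀ (g : {g : V ≃ₗ[ℚ] V // StabCond B Γ Z g}) (x : ↥W),
          (↑((Φ g).1 x) : V) = g.1 (↑x : V)) ∧
      (∀ g₁ g₂ g₃ : {g : V ≃ₗ[ℚ] V // StabCond B Γ Z g},
          g₃.1 = g₁.1 * g₂.1 → (Φ g₃).1 = (Φ g₁).1 * (Φ g₂).1) := by
  classical
  have hrefl : LinearMap.BilinForm.IsRefl B := fun x y h => by rw [hsymm]; exact h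
  have hLPile : ∀ x ∈ LPi, x ∈ Γ := fun x hx => ((hLPi x).1 hx).1
  have hLPiW : ∀ x ∈ LPi, x ∈ W := fun x hx => hW ▸ Submodule.subset_span hx
  -- clearing denominators
  have hclear : ∀ v : V, ∃ n : ℤ, n ≠ 0 ∧ (n : ℚ) • v ∈ Γ := by
    intro v
    have hv : v ∈ Submodule.span ℚ (Γ : Set V) := by rw [hspan]; trivial
    induction hv using Submodule.span_induction with
    | mem x hx => exact ⟨1, one_ne_zero, by simpa using hx⟩
    | zero => exact ⟨1, one_ne_zero, by simp⟩
    | add x y _ _ hx hy =>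
      obtain ⟨n, hn, hnx⟩ := hx
      obtain ⟨m, hm, hmy⟩ := hy
      refine ⟨n * m, mul_ne_zero hn hm, ?_⟩
      have heq : ((n * m : ℤ) : ℚ) • (x + y) = (m : ℤ) • ((n : ℚ) • x) + (n : ℤ) • ((m : ℚ) • y) := by
        rw [← Int.cast_smul_eq_zsmul ℚ m, ← Int.cast_smul_eq_zsmul ℚ n]
        push_cast
        module
      rw [heq]
      exact Γ.add_mem (Γ.smul_mem _ hnx) (Γ.smul_mem _ hmy)
    | smul q x _ hx =>
      obtain ⟨n, hn, hnx⟩ := hx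
      by_cases hq : q = 0
      · exact ⟨1, one_ne_zero, by simp [hq]⟩
      refine ⟨n * (q.den : ℤ), mul_ne_zero hn (by exact_mod_cast q.den_ne_zero), ?_⟩
      have heq : ((n * (q.den : ℤ) : ℤ) : ℚ) • (q • x) = q.num • ((n : ℚ) • x) := by
        rw [← Int.cast_smul_eq_zsmul ℚ q.num, smul_smul, smul_smul]
        congr 1
        push_cast
        have hden : (q.den : ℚ) * q = (q.num : ℚ) := by
          rw [mul_comm]
          exact_mod_cast Rat.mul_den_eq_num q
        rw [mul_assoc, hden]
        ring
      rw [heq]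
      exact Γ.smul_mem _ hnx
  -- `W` is the orthogonal complement of `Z`
  have hWo : W = LinearMap.BilinForm.orthogonal B Z := by
    apply le_antisymm
    · rw [hW]
      refine Submodule.span_le.2 fun x hx => ?_
      intro z hz
      show B z x = 0
      rw [hsymm]
      exact ((hLPi x).1 hx).2 z hz
    · intro v hv
      obtain ⟨n, hn, hnv⟩ := hclear v
      have hnvLPi : (n : ℚ) • v ∈ LPi := by
        refine (hLPi _).2 ⟨hnv, fun z hz => ?_⟩
        have h0 : B v z = 0 := by rw [hsymm]; exact hv z hz
        rw [map_smul, LinearMap.smul_apply, h0, smul_zero]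
      rw [hW]
      have hv' : v = ((n : ℚ)⁻¹) • ((n : ℚ) • v) := by
        rw [inv_smul_smul₀ (by exact_mod_cast hn)]
      rw [hv']
      exact Submodule.smul_mem _ _ (Submodule.subset_span hnvLPi)
  have hmemW : ∀ v : V, v ∈ W ↔ ∀ z ∈ Z, B v z = 0 := by
    intro v
    rw [hWo]
    constructor
    · intro hv z hz; rw [hsymm]; exact hv z hz
    · intro hv z hz; show B z v = 0; rw [hsymm]; exact hv z hz
  have hΓcap : ∀ v ∈ Γ, v ∈ W → v ∈ LPi := fun v hv hw => (hLPi v).2 ⟨hv, (hmemW v).1 hw⟩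
  -- `V = W ⊕ Z`
  have hcompl : IsCompl W Z := by
    have hrestr : (LinearMap.BilinForm.restrict B W).Nondegenerate := by
      refine LinearMap.BilinForm.Nondegenerate.ofSeparatingLeft ?_
      intro x hx
      have hx0 : (x : V) = 0 := by
        apply hLPind
        · rw [← hW]; exact x.2
        · intro y hy
          have := hx ⟨y, hLPiW y hy⟩
          simpa using this
      exact Subtype.ext hx0
    have h1 := LinearMap.BilinForm.isCompl_orthogonal_of_restrict_nondegenerate hrefl hrestr
    have h2 : LinearMap.BilinForm.orthogonal B W = Z := by
      rw [hWo]; exact LinearMap.BilinForm.orthogonal_orthogonal (LinearMap.BilinForm.Nondegenerate.ofSeparatingLeft hnd) hrefl Z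
    rwa [h2] at h1
  have hWZ0 : ∀ (a : ↥W) (c : ↥Z), B (a : V) (c : V) = 0 := fun a c =>
    (hmemW _).1 a.2 _ c.2
  have hZW0 : ∀ (a : ↥W) (c : ↥Z), B (c : V) (a : V) = 0 := fun a c => by
    rw [hsymm]; exact hWZ0 a c
  -- the key surjectivity result coming from unimodularity
  obtain ⟨r, hr1, hr2⟩ := exists_retraction Γ hfg LPi W hΓcap hLPiW
  have hkey : ∀ x : V, x ∈ W → (∀ y ∈ LPi, ∃ k : ℤ, B x y = (k : ℚ)) →
      ∃ z ∈ Z, x + z ∈ Γ := by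
    intro x hxW hx
    obtain ⟨v, hv⟩ := represent_functional B hnd Γ hspan hfg
      ((LinearMap.restrictScalars ℤ (B x)).comp r)
    have hvΓ : v ∈ Γ := by
      rw [← hunimod]
      refine ⟨by rw [hspan]; trivial, fun y hy => ?_⟩
      obtain ⟨k, hk⟩ := hx (r ⟨y, hy⟩) (hr1 ⟨y, hy⟩)
      exact ⟨k, by rw [hv ⟨y, hy⟩]; exact hk⟩
    have hvy : ∀ y ∈ LPi, B v y = B x y := by
      intro y hy
      have h1 := hv ⟨y, hLPile y hy⟩
      rwa [LinearMap.comp_apply, hr2 ⟨y, hLPile y hy⟩ hy] at h1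
    obtain ⟨w, z, hvwz⟩ := exists_decomp hcompl v
    have hwx : (w : V) = x := by
      have h0 : ∀ y ∈ LPi, B ((w : V) - x) y = 0 := by
        intro y hy
        have hzy : B (z : V) y = 0 := by
          rw [hsymm]; exact (hmemW y).1 (hLPiW y hy) _ z.2
        have hsplit : B v y = B (w : V) y + B (z : V) y := by
          rw [hvwz, map_add, LinearMap.add_apply]
        have h2 := hvy y hy
        rw [hsplit, hzy, add_zero] at h2
        rw [map_sub, LinearMap.sub_apply, h2, sub_self]
      have h3 := hLPind ((w : V) - x)
        (by rw [← hW]; exact Submodule.sub_mem W w.2 hxW) h0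
      exact sub_eq_zero.1 h3
    refine ⟨z, z.2, ?_⟩
    have h4 : x + (z : V) = v := by rw [hvwz, hwx]
    rwa [h4]
  -- symmetries fixing `Z` preserve `W` and `LPi`
  have hgW : ∀ g : V ≃ₗ[ℚ] V, StabCond B Γ Z g → ∀ v ∈ W, g v ∈ W := by
    intro g hg v hv
    rw [hmemW] at hv ⊢
    intro z hz
    have h1 : B (g v) (g z) = B v z := hg.2.2.1 v z
    rw [hg.2.2.2 z hz] at h1
    rw [h1]; exact hv z hz
  have hgW' : ∀ g : V ≃ₗ[ℚ] V, StabCond B Γ Z g → ∀ v ∈ W, g.symm v ∈ W := by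
    intro g hg v hv
    rw [hmemW] at hv ⊢
    intro z hz
    have h1 : B (g (g.symm v)) (g z) = B (g.symm v) z := hg.2.2.1 _ _
    rw [g.apply_symm_apply, hg.2.2.2 z hz] at h1
    rw [← h1]; exact hv z hz
  have hgLPi : ∀ g : V ≃ₗ[ℚ] V, StabCond B Γ Z g → ∀ y ∈ LPi, g y ∈ LPi := by
    intro g hg y hy
    exact hΓcap _ (hg.1 y (hLPile y hy)) (hgW g hg y (hLPiW y hy))
  have hgLPi' : ∀ g : V ≃ₗ[ℚ] V, StabCond B Γ Z g → ∀ y ∈ LPi, g.symm y ∈ LPi := by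
    intro g hg y hy
    exact hΓcap _ (hg.2.1 y (hLPile y hy)) (hgW' g hg y (hLPiW y hy))
  -- the restriction of a stabilizing symmetry satisfies the discriminant condition
  have hdiscOf : ∀ (g : V ≃ₗ[ℚ] V) (hg : StabCond B Γ Z g),
      DiscTrivCond B LPi W (restrEquiv W g (hgW g hg) (hgW' g hg)) := by
    intro g hg
    refine ⟨?_, ?_, ?_, ?_⟩
    · intro x hx; rw [restrEquiv_apply]; exact hgLPi g hg _ hx
    · intro x hx; rw [restrEquiv_symm_apply]; exact hgLPi' g hg _ hx
    · intro x y; rw [restrEquiv_apply, restrEquiv_apply]; exact hg.2.2.1 _ _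
    · intro x hx
      obtain ⟨z, hz, hγ⟩ := hkey (x : V) x.2 hx
      have h1 : g ((x : V) + z) ∈ Γ := hg.1 _ hγ
      have h2 : g ((x : V) + z) = g (x : V) + z := by rw [map_add, hg.2.2.2 z hz]
      have h4 : g ((x : V) + z) - ((x : V) + z) = g (x : V) - (x : V) := by
        rw [h2]; abel
      have h5 : g (x : V) - (x : V) ∈ LPi := by
        refine hΓcap _ ?_ (Submodule.sub_mem W (hgW g hg _ x.2) x.2)
        rw [← h4]
        exact Submodule.sub_mem Γ h1 hγ
      rw [restrEquiv_apply]; exact h5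
  -- extensions of discriminant-trivial automorphisms stabilize `Γ`
  have hdualΓ : ∀ v ∈ Γ, ∀ (w : ↥W) (z : ↥Z), v = ↑w + ↑z →
      ∀ y ∈ LPi, ∃ k : ℤ, B (w : V) y = (k : ℚ) := by
    intro v hv w z hvwz y hy
    obtain ⟨k, hk⟩ := hint v hv y (hLPile y hy)
    refine ⟨k, ?_⟩
    have hzy : B (z : V) y = 0 := by
      rw [hsymm]; exact (hmemW y).1 (hLPiW y hy) _ z.2
    have hsplit : B v y = B (w : V) y + B (z : V) y := by
      rw [hvwz, map_add, LinearMap.add_apply]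
    rw [hsplit, hzy, add_zero] at hk
    exact hk
  have hextΓ : ∀ h : ↥W ≃ₗ[ℚ] ↥W,
      (∀ x : ↥W, (∀ y ∈ LPi, ∃ k : ℤ, B (x : V) y = (k : ℚ)) → (↑(h x) : V) - ↑x ∈ LPi) →
      ∀ v ∈ Γ, extEquiv W Z hcompl h v ∈ Γ := by
    intro h h4 v hv
    obtain ⟨w, z, rfl⟩ := exists_decomp hcompl v
    have hw := h4 w (fun y hy => hdualΓ _ hv w z rfl y hy)
    have heq : extEquiv W Z hcompl h (↑w + ↑z) = (↑w + ↑z) + ((↑(h w) : V) - ↑w) := by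
      rw [map_add, extEquiv_apply_left, extEquiv_apply_right]; abel
    rw [heq]
    exact Γ.add_mem hv (hLPile _ hw)
  have hdisc4symm : ∀ h : ↥W ≃ₗ[ℚ] ↥W, DiscTrivCond B LPi W h →
      ∀ x : ↥W, (∀ y ∈ LPi, ∃ k : ℤ, B (x : V) y = (k : ℚ)) →
      (↑(h.symm x) : V) - ↑x ∈ LPi := by
    intro h hh x hx
    have hu : ∀ y ∈ LPi, ∃ k : ℤ, B (↑(h.symm x) : V) y = (k : ℚ) := by
      intro y hy
      have h3 := hh.2.2.1 (h.symm x) ⟨y, hLPiW y hy⟩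
      rw [h.apply_symm_apply] at h3
      obtain ⟨k, hk⟩ := hx ↑(h ⟨y, hLPiW y hy⟩) (hh.1 _ hy)
      exact ⟨k, by rw [← h3]; exact hk⟩
    have h5 := hh.2.2.2 (h.symm x) hu
    rw [h.apply_symm_apply] at h5
    have h6 := LPi.neg_mem h5
    rw [neg_sub] at h6
    exact h6
  have hstabOf : ∀ (h : ↥W ≃ₗ[ℚ] ↥W) (hh : DiscTrivCond B LPi W h),
      StabCond B Γ Z (extEquiv W Z hcompl h) := by
    intro h hh
    refine ⟨hextΓ h hh.2.2.2, ?_, ?_, ?_⟩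
    · intro x hx
      rw [extEquiv_symm]
      exact hextΓ h.symm (hdisc4symm h hh) x hx
    · intro x y
      obtain ⟨w1, z1, rfl⟩ := exists_decomp hcompl x
      obtain ⟨w2, z2, rfl⟩ := exists_decomp hcompl y
      simp only [map_add, LinearMap.add_apply, extEquiv_apply_left, extEquiv_apply_right,
        hWZ0, hZW0, hh.2.2.1, add_zero, zero_add]
    · intro z hz
      exact extEquiv_apply_right W Z hcompl h ⟨z, hz⟩
  -- assemble the equivalence
  refine ⟨⟨fun g => ⟨restrEquiv W g.1 (hgW g.1 g.2) (hgW' g.1 g.2), hdiscOf g.1 g.2⟩,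
      fun h => ⟨extEquiv W Z hcompl h.1, hstabOf h.1 h.2⟩, ?_, ?_⟩, ?_, ?_⟩
  · intro g
    apply Subtype.ext
    apply LinearEquiv.toLinearMap_injective
    apply LinearMap.ext
    intro v
    show extEquiv W Z hcompl (restrEquiv W g.1 (hgW g.1 g.2) (hgW' g.1 g.2)) v = g.1 v
    obtain ⟨w, z, rfl⟩ := exists_decomp hcompl v
    rw [map_add, extEquiv_apply_left, extEquiv_apply_right, restrEquiv_apply,
      map_add, g.2.2.2.2 z z.2]
  · intro h
    apply Subtype.ext
    apply LinearEquiv.toLinearMap_injective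
    apply LinearMap.ext
    intro x
    apply Subtype.ext
    simp only [LinearEquiv.coe_coe, restrEquiv_apply, extEquiv_apply_left]
  · intro g x
    rfl
  · intro g₁ g₂ g₃ h3
    apply LinearEquiv.toLinearMap_injective
    apply LinearMap.ext
    intro x
    apply Subtype.ext
    show g₃.1 (x : V) = g₁.1 (g₂.1 (x : V))
    rw [h3]
    rfl
end
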